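/- arXiv:2512.11217 — 6 statements merged into one kernel-verified Lean document; each statement's English description precedes it below -/
import Mathlib

section
/- For any G-valued random variable X and integer n >= 1, H((n+1)X) - H(nX) <= (1/n)(H((n+1)X) - H(X)). In particular, the entropy increments H((j+1)X) - H(jX) are non-increasing in j. -/
open scoped BigOperators Pointwise
noncomputable section

/-- A finitely supported probability mass function. -/
def IsPMF {α : Type*} (p : α → ℝ) : Prop :=
  (∀ x, 0 ≤ p x) ∧ (Function.support p).Finite ∧ ∑ᶠ x, p x = 1

/-- Shannon entropy of a pmf. -/
def ent {α : Type*} (p : α → ℝ) : ℝ := ∑ᶠ x, -(p x * Real.log (p x))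

/-- Convolution of pmfs: the distribution of the sum of independent random variables. -/
def conv {G : Type*} [AddCommGroup G] (p q : G → ℝ) : G → ℝ :=
  fun z => ∑ᶠ x, p x * q (z - x)

/-- Distribution of the negation. -/
def negp {G : Type*} [AddCommGroup G] (p : G → ℝ) : G → ℝ := fun x => p (-x)

/-- Entropic Ruzsa distance between (the distributions of) two random variables. -/
def rdist {G : Type*} [AddCommGroup G] (p q : G → ℝ) : ℝ :=
  ent (conv p (negp q)) - ent p / 2 - ent q / 2

/-- Distribution of the sum of `n` iid copies. -/
def iterConv {G : Type*} [AddCommGroup G] (p : G → ℝ) : ℕ → G → ℝ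
  | 0 => fun x => Set.indicator ({0} : Set G) (fun _ => (1 : ℝ)) x
  | n + 1 => conv (iterConv p n) p

set_option linter.unusedSectionVars false

namespace EIB
open Finset Function Real

variable {α β γ δ Ω : Type*}

/-- probability mass function vanishing outside `s`. -/
def PMFOn (s : Finset α) (p : α → ℝ) : Prop :=
  (∀ x, 0 ≤ p x) ∧ (∀ x, x ∉ s → p x = 0) ∧ ∑ x ∈ s, p x = 1

theorem ent_eq_sum {s : Finset α} {p : α → ℝ} (h0 : ∀ x, x ∉ s → p x = 0) :
    ent p = ∑ x ∈ s, negMulLog (p x) := by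
  have hsub : Function.support (fun x => -(p x * Real.log (p x))) ⊆ ↑s := by
    intro x hx
    by_contra hxs
    simp only [Function.mem_support] at hx
    exact hx (by rw [h0 x hxs]; ring)
  rw [ent, finsum_eq_sum_of_support_subset _ hsub]
  exact Finset.sum_congr rfl fun x _ => by simp only [negMulLog]; ring

theorem isPMF_of_pmfOn {s : Finset α} {p : α → ℝ} (h : PMFOn s p) : IsPMF p := by
  refine ⟨h.1, ?_, ?_⟩
  · exact Set.Finite.subset s.finite_toSet (fun x hx => by
      by_contra hxs; exact hx (h.2.1 x hxs))
  · rw [finsum_eq_sum_of_support_subset p (fun x hx => by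
      by_contra hxs; exact hx (h.2.1 x hxs)), h.2.2]

theorem pmfOn_of_isPMF {p : α → ℝ} (h : IsPMF p) : PMFOn h.2.1.toFinset p := by
  refine ⟨h.1, fun x hx => ?_, ?_⟩
  · by_contra hne
    exact hx (h.2.1.mem_toFinset.2 hne)
  · rw [← finsum_eq_sum p h.2.1, h.2.2]

variable [DecidableEq α] [DecidableEq β] [DecidableEq γ] [DecidableEq δ]

/-- pushforward of a mass function along `f`. -/
def push (f : α → β) (s : Finset α) (p : α → ℝ) : β → ℝ :=
  fun b => ∑ a ∈ s with f a = b, p a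

theorem push_nonneg {f : α → β} {s : Finset α} {p : α → ℝ} (hp : ∀ x, 0 ≤ p x) (b : β) :
    0 ≤ push f s p b := Finset.sum_nonneg fun a _ => hp a

theorem push_eq_zero {f : α → β} {s : Finset α} {p : α → ℝ} {b : β} (hb : b ∉ s.image f) :
    push f s p b = 0 := by
  apply Finset.sum_eq_zero
  intro a ha
  rw [mem_filter] at ha
  exact ((hb (ha.2 ▸ mem_image_of_mem f ha.1)).elim)

theorem le_push {f : α → β} {s : Finset α} {p : α → ℝ} (hp : ∀ x, 0 ≤ p x) {a : α}
    (ha : a ∈ s) : p a ≤ push f s p (f a) :=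
  Finset.single_le_sum (fun i _ => hp i) (mem_filter.mpr ⟨ha, rfl⟩)

theorem push_pos {f : α → β} {s : Finset α} {p : α → ℝ} (hp : ∀ x, 0 ≤ p x)
    (hpos : ∀ x ∈ s, p x ≠ 0) {b : β} (hb : b ∈ s.image f) : 0 < push f s p b := by
  obtain ⟨a, ha, rfl⟩ := mem_image.1 hb
  exact lt_of_lt_of_le (lt_of_le_of_ne (hp a) (Ne.symm (hpos a ha))) (le_push hp ha)

theorem sum_push_mul {f : α → β} {s : Finset α} {p : α → ℝ} (g : β → ℝ) :
    ∑ b ∈ s.image f, push f s p b * g b = ∑ a ∈ s, p a * g (f a) := by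
  rw [← Finset.sum_fiberwise_of_maps_to (fun a ha => mem_image_of_mem f ha)
    (fun a => p a * g (f a))]
  refine Finset.sum_congr rfl fun b _ => ?_
  rw [push, Finset.sum_mul]
  exact Finset.sum_congr rfl fun a ha => by rw [(mem_filter.mp ha).2]

theorem sum_push {f : α → β} {s : Finset α} {p : α → ℝ} :
    ∑ b ∈ s.image f, push f s p b = ∑ a ∈ s, p a := by
  have := sum_push_mul (f := f) (s := s) (p := p) (fun _ => (1:ℝ))
  simpa using this

theorem pmfOn_push {f : α → β} {s : Finset α} {p : α → ℝ} (h : PMFOn s p) :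
    PMFOn (s.image f) (push f s p) :=
  ⟨push_nonneg h.1, fun _ hb => push_eq_zero hb, by rw [sum_push, h.2.2]⟩

theorem ent_push_eq {f : α → β} {s : Finset α} {p : α → ℝ} :
    ent (push f s p) = ∑ a ∈ s, p a * (-Real.log (push f s p (f a))) := by
  rw [ent_eq_sum (s := s.image f) (fun b hb => push_eq_zero hb),
    ← sum_push_mul (fun b => -Real.log (push f s p b))]
  exact Finset.sum_congr rfl fun b _ => by simp only [negMulLog]; ring

theorem ent_push_le {f : α → β} {s : Finset α} {p : α → ℝ} (hp : ∀ x, 0 ≤ p x)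
    (h0 : ∀ x, x ∉ s → p x = 0) : ent (push f s p) ≤ ent p := by
  rw [ent_push_eq, ent_eq_sum h0]
  apply Finset.sum_le_sum
  intro a ha
  rcases eq_or_lt_of_le (hp a) with h | h
  · simp only [← h, negMulLog]; ring_nf
    simp
  · have hle : p a ≤ push f s p (f a) := le_push hp ha
    have hlog := Real.log_le_log h hle
    rw [negMulLog]
    nlinarith
theorem ent_push_inj {f : α → β} {s : Finset α} {p : α → ℝ} (hf : Set.InjOn f s)
    (h0 : ∀ x, x ∉ s → p x = 0) : ent (push f s p) = ent p := by
  rw [ent_eq_sum (s := s.image f) (fun b hb => push_eq_zero hb), ent_eq_sum h0,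
    Finset.sum_image (fun x hx y hy hxy => hf hx hy hxy)]
  refine Finset.sum_congr rfl fun a ha => ?_
  congr 1
  show ∑ a' ∈ s with f a' = f a, p a' = p a
  have : s.filter (fun a' => f a' = f a) = {a} := by
    ext b
    simp only [mem_filter, mem_singleton]
    constructor
    · rintro ⟨hb, hfb⟩; exact hf hb ha hfb
    · rintro rfl; exact ⟨ha, rfl⟩
  rw [this, Finset.sum_singleton]

theorem push_push {f : α → β} {g : β → γ} {s : Finset α} {p : α → ℝ} :
    push g (s.image f) (push f s p) = push (g ∘ f) s p := by
  funext c
  show ∑ b ∈ (s.image f) with g b = c, push f s p b = _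
  calc ∑ b ∈ (s.image f).filter (fun b => g b = c), push f s p b
      = ∑ b ∈ (s.image f).filter (fun b => g b = c), ∑ a ∈ s with f a = b, p a := rfl
    _ = ∑ a ∈ s with f a ∈ (s.image f).filter (fun b => g b = c), p a :=
        Finset.sum_fiberwise_eq_sum_filter s _ f p
    _ = ∑ a ∈ s with g (f a) = c, p a := by
        apply Finset.sum_congr _ (fun _ _ => rfl)
        apply Finset.filter_congr
        intro a ha
        simp [mem_filter, mem_image_of_mem f ha]

theorem push_superset {g : β → γ} {t t' : Finset β} {ν : β → ℝ} (hsub : t ⊆ t')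
    (h0 : ∀ b ∈ t', b ∉ t → ν b = 0) : push g t' ν = push g t ν := by
  funext c
  refine (Finset.sum_subset (filter_subset_filter _ hsub) ?_).symm
  intro b hb hbt
  exact h0 b (mem_filter.1 hb).1 fun hmem => hbt (mem_filter.mpr ⟨hmem, (mem_filter.1 hb).2⟩)

theorem push_filter {f : α → β} {s : Finset α} {p : α → ℝ} [DecidablePred (fun a => p a ≠ 0)] :
    push f (s.filter (fun a => p a ≠ 0)) p = push f s p := by
  refine (push_superset (filter_subset _ _) ?_).symm
  intro b _ hbt
  by_contra hne
  exact hbt (mem_filter.mpr ⟨‹b ∈ s›, hne⟩)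

theorem ent_push_comp_inj {f : α → β} {g : β → γ} (hg : Function.Injective g)
    {s : Finset α} {p : α → ℝ} : ent (push (g ∘ f) s p) = ent (push f s p) := by
  rw [← push_push]
  exact ent_push_inj (hg.injOn) fun b hb => push_eq_zero hb

theorem ent_push_comp_le {f : α → β} {g : β → γ} {s : Finset α} {p : α → ℝ}
    (hp : ∀ x, 0 ≤ p x) : ent (push (g ∘ f) s p) ≤ ent (push f s p) := by
  rw [← push_push]
  exact ent_push_le (push_nonneg hp) fun b hb => push_eq_zero hb

theorem sum_push_fst {A : Ω → α} {B : Ω → β} {s : Finset Ω} {μ : Ω → ℝ} {b : β} :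
    ∑ a ∈ s.image A, push (fun ω => (A ω, B ω)) s μ (a, b) = push B s μ b := by
  classical
  show (∑ a ∈ s.image A, ∑ ω ∈ s with (A ω, B ω) = (a, b), μ ω) = _
  have : ∀ a, (s.filter (fun ω => (A ω, B ω) = (a, b)))
      = (s.filter (fun ω => B ω = b)).filter (fun ω => A ω = a) := by
    intro a
    rw [Finset.filter_filter]
    apply Finset.filter_congr
    intro ω _
    simp [Prod.ext_iff, and_comm]
  simp_rw [this]
  rw [Finset.sum_fiberwise_eq_sum_filter (s.filter (fun ω => B ω = b)) _ A μ]
  rw [Finset.filter_true_of_mem (fun ω hω => mem_image_of_mem A (mem_filter.1 hω).1)]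
  rfl

theorem sum_push_snd {B : Ω → β} {C : Ω → γ} {s : Finset Ω} {μ : Ω → ℝ} {b : β} :
    ∑ c ∈ s.image C, push (fun ω => (B ω, C ω)) s μ (b, c) = push B s μ b := by
  classical
  show (∑ c ∈ s.image C, ∑ ω ∈ s with (B ω, C ω) = (b, c), μ ω) = _
  have : ∀ c, (s.filter (fun ω => (B ω, C ω) = (b, c)))
      = (s.filter (fun ω => B ω = b)).filter (fun ω => C ω = c) := by
    intro c
    rw [Finset.filter_filter]
    apply Finset.filter_congr
    intro ω _
    simp [Prod.ext_iff, and_comm]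
  simp_rw [this]
  rw [Finset.sum_fiberwise_eq_sum_filter (s.filter (fun ω => B ω = b)) _ C μ]
  rw [Finset.filter_true_of_mem (fun ω hω => mem_image_of_mem C (mem_filter.1 hω).1)]
  rfl

theorem pmfOn_prod {s : Finset α} {t : Finset β} {p : α → ℝ} {q : β → ℝ}
    (hp : PMFOn s p) (hq : PMFOn t q) : PMFOn (s ×ˢ t) (fun ab => p ab.1 * q ab.2) := by
  refine ⟨fun x => mul_nonneg (hp.1 _) (hq.1 _), fun x hx => ?_, ?_⟩
  · show p x.1 * q x.2 = 0
    rw [Finset.mem_product, not_and_or] at hx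
    rcases hx with h | h
    · rw [hp.2.1 _ h, zero_mul]
    · rw [hq.2.1 _ h, mul_zero]
  · rw [Finset.sum_product]
    simp_rw [← Finset.mul_sum, hq.2.2, mul_one, hp.2.2]

theorem ent_prod {s : Finset α} {t : Finset β} {p : α → ℝ} {q : β → ℝ}
    (hp : PMFOn s p) (hq : PMFOn t q) :
    ent (fun ab : α × β => p ab.1 * q ab.2) = ent p + ent q := by
  rw [ent_eq_sum (s := s ×ˢ t) (pmfOn_prod hp hq).2.1, Finset.sum_product,
    ent_eq_sum hp.2.1, ent_eq_sum hq.2.1]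
  simp_rw [negMulLog_mul, Finset.sum_add_distrib, ← Finset.sum_mul, ← Finset.mul_sum,
    hq.2.2, one_mul]
  rw [← Finset.sum_mul, hp.2.2, one_mul]
theorem submod_aux {A : Ω → α} {B : Ω → β} {C : Ω → γ} {s : Finset Ω} {μ : Ω → ℝ}
    (h : PMFOn s μ) (hpos : ∀ ω ∈ s, μ ω ≠ 0) :
    ent (push (fun ω => (A ω, B ω, C ω)) s μ) + ent (push B s μ) ≤
      ent (push (fun ω => (A ω, B ω)) s μ) + ent (push (fun ω => (B ω, C ω)) s μ) := by
  classical
  have hμpos : ∀ ω ∈ s, 0 < μ ω := fun ω hω => lt_of_le_of_ne (h.1 ω) (Ne.symm (hpos ω hω))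
  set νABC := push (fun ω => (A ω, B ω, C ω)) s μ with hABCdef
  set νAB := push (fun ω => (A ω, B ω)) s μ with hABdef
  set νBC := push (fun ω => (B ω, C ω)) s μ with hBCdef
  set νB := push B s μ with hBdef
  have hABC : ∀ ω ∈ s, 0 < νABC (A ω, B ω, C ω) := fun ω hω =>
    lt_of_lt_of_le (hμpos ω hω) (le_push h.1 hω)
  have hAB : ∀ ω ∈ s, 0 < νAB (A ω, B ω) := fun ω hω =>
    lt_of_lt_of_le (hμpos ω hω) (le_push h.1 hω)
  have hBC : ∀ ω ∈ s, 0 < νBC (B ω, C ω) := fun ω hω =>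
    lt_of_lt_of_le (hμpos ω hω) (le_push h.1 hω)
  have hB : ∀ ω ∈ s, 0 < νB (B ω) := fun ω hω =>
    lt_of_lt_of_le (hμpos ω hω) (le_push h.1 hω)
  -- the correction term
  set g : α × β × γ → ℝ := fun v =>
    νAB (v.1, v.2.1) * νBC (v.2.1, v.2.2) / (νABC v * νB v.2.1) with hgdef
  have hg : ∀ ω ∈ s, g (A ω, B ω, C ω) =
      νAB (A ω, B ω) * νBC (B ω, C ω) / (νABC (A ω, B ω, C ω) * νB (B ω)) := fun ω hω => rfl
  -- Σ2 ≤ 1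
  have hS2 : ∑ ω ∈ s, μ ω * g (A ω, B ω, C ω) ≤ 1 := by
    rw [← sum_push_mul (f := fun ω => (A ω, B ω, C ω)) (s := s) (p := μ) g]
    have step1 : ∑ v ∈ s.image (fun ω => (A ω, B ω, C ω)), νABC v * g v
        = ∑ v ∈ s.image (fun ω => (A ω, B ω, C ω)),
            νAB (v.1, v.2.1) * νBC (v.2.1, v.2.2) / νB v.2.1 := by
      refine Finset.sum_congr rfl fun v hv => ?_
      have hv0 : νABC v ≠ 0 := by
        have := push_pos (f := fun ω => (A ω, B ω, C ω)) h.1 hpos hv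
        rw [← hABCdef] at this
        exact this.ne'
      rw [hgdef]
      show νABC v * (νAB (v.1, v.2.1) * νBC (v.2.1, v.2.2) / (νABC v * νB v.2.1)) = _
      rw [mul_div_assoc', mul_div_mul_left _ _ hv0]
    rw [step1]
    have step2 : ∑ v ∈ s.image (fun ω => (A ω, B ω, C ω)),
          νAB (v.1, v.2.1) * νBC (v.2.1, v.2.2) / νB v.2.1
        ≤ ∑ v ∈ (s.image A) ×ˢ ((s.image B) ×ˢ (s.image C)),
            νAB (v.1, v.2.1) * νBC (v.2.1, v.2.2) / νB v.2.1 := by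
      apply Finset.sum_le_sum_of_subset_of_nonneg
      · intro v hv
        obtain ⟨ω, hω, rfl⟩ := mem_image.1 hv
        exact Finset.mem_product.2 ⟨mem_image_of_mem A hω,
          Finset.mem_product.2 ⟨mem_image_of_mem B hω, mem_image_of_mem C hω⟩⟩
      · intro v _ _
        apply div_nonneg (mul_nonneg (push_nonneg h.1 _) (push_nonneg h.1 _)) (push_nonneg h.1 _)
    refine le_trans step2 ?_
    rw [Finset.sum_product]
    have inner : ∀ a, ∑ bc ∈ (s.image B) ×ˢ (s.image C),
        νAB (a, bc.1) * νBC (bc.1, bc.2) / νB bc.1 = ∑ b ∈ s.image B, νAB (a, b) := by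
      intro a
      rw [Finset.sum_product]
      refine Finset.sum_congr rfl fun b hb => ?_
      have hb0 : νB b ≠ 0 := by
        have := push_pos (f := B) h.1 hpos hb
        rw [← hBdef] at this
        exact this.ne'
      calc ∑ c ∈ s.image C, νAB (a, b) * νBC (b, c) / νB b
          = (νAB (a, b) / νB b) * ∑ c ∈ s.image C, νBC (b, c) := by
            rw [Finset.mul_sum]
            exact Finset.sum_congr rfl fun c _ => by ring
        _ = (νAB (a, b) / νB b) * νB b := by rw [sum_push_snd]
        _ = νAB (a, b) := div_mul_cancel₀ _ hb0
    simp_rw [inner]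
    rw [Finset.sum_comm]
    have : ∀ b ∈ s.image B, ∑ a ∈ s.image A, νAB (a, b) = νB b := fun b _ => sum_push_fst
    rw [Finset.sum_congr rfl this]
    rw [hBdef, sum_push, h.2.2]
  -- pointwise bound and conclusion
  have key : 0 ≤ ∑ ω ∈ s, μ ω * (Real.log (νABC (A ω, B ω, C ω)) + Real.log (νB (B ω))
      - Real.log (νAB (A ω, B ω)) - Real.log (νBC (B ω, C ω))) := by
    have hpt : ∀ ω ∈ s, μ ω - μ ω * g (A ω, B ω, C ω)
        ≤ μ ω * (Real.log (νABC (A ω, B ω, C ω)) + Real.log (νB (B ω))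
          - Real.log (νAB (A ω, B ω)) - Real.log (νBC (B ω, C ω))) := by
      intro ω hω
      have h1 := hABC ω hω
      have h2 := hB ω hω
      have h3 := hAB ω hω
      have h4 := hBC ω hω
      have hq : (0:ℝ) < νAB (A ω, B ω) * νBC (B ω, C ω) /
          (νABC (A ω, B ω, C ω) * νB (B ω)) := by positivity
      have hlog := Real.log_le_sub_one_of_pos hq
      rw [Real.log_div (by positivity) (by positivity), Real.log_mul h3.ne' h4.ne',
        Real.log_mul h1.ne' h2.ne'] at hlog
      rw [hg ω hω]
      have hμ := hμpos ω hω
      nlinarith [hμ.le]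
    calc (0:ℝ) ≤ 1 - ∑ ω ∈ s, μ ω * g (A ω, B ω, C ω) := by linarith
      _ = ∑ ω ∈ s, (μ ω - μ ω * g (A ω, B ω, C ω)) := by
          rw [Finset.sum_sub_distrib, h.2.2]
      _ ≤ _ := Finset.sum_le_sum hpt
  rw [hABCdef, hABdef, hBCdef, hBdef] at *
  rw [ent_push_eq, ent_push_eq, ent_push_eq, ent_push_eq]
  have expand : ∑ ω ∈ s, μ ω * (Real.log (push (fun ω => (A ω, B ω, C ω)) s μ (A ω, B ω, C ω))
        + Real.log (push B s μ (B ω)) - Real.log (push (fun ω => (A ω, B ω)) s μ (A ω, B ω))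
        - Real.log (push (fun ω => (B ω, C ω)) s μ (B ω, C ω)))
      = (∑ ω ∈ s, μ ω * (-Real.log (push (fun ω => (A ω, B ω)) s μ (A ω, B ω)))
          + ∑ ω ∈ s, μ ω * (-Real.log (push (fun ω => (B ω, C ω)) s μ (B ω, C ω))))
        - (∑ ω ∈ s, μ ω * (-Real.log (push (fun ω => (A ω, B ω, C ω)) s μ (A ω, B ω, C ω)))
          + ∑ ω ∈ s, μ ω * (-Real.log (push B s μ (B ω)))) := by
    rw [← Finset.sum_add_distrib, ← Finset.sum_add_distrib, ← Finset.sum_sub_distrib]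
    exact Finset.sum_congr rfl fun ω _ => by ring
  linarith [key, expand.symm.le, expand.le]
theorem submod {A : Ω → α} {B : Ω → β} {C : Ω → γ} {s : Finset Ω} {μ : Ω → ℝ}
    (h : PMFOn s μ) :
    ent (push (fun ω => (A ω, B ω, C ω)) s μ) + ent (push B s μ) ≤
      ent (push (fun ω => (A ω, B ω)) s μ) + ent (push (fun ω => (B ω, C ω)) s μ) := by
  classical
  rw [← push_filter (f := fun ω => (A ω, B ω, C ω)) (s := s) (p := μ),
    ← push_filter (f := B) (s := s) (p := μ),
    ← push_filter (f := fun ω => (A ω, B ω)) (s := s) (p := μ),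
    ← push_filter (f := fun ω => (B ω, C ω)) (s := s) (p := μ)]
  apply submod_aux
  · refine ⟨h.1, fun x hx => ?_, ?_⟩
    · rw [Finset.mem_filter, not_and_or] at hx
      rcases hx with h' | h'
      · exact h.2.1 x h'
      · simpa using h'
    · rw [Finset.sum_filter_ne_zero, h.2.2]
  · intro ω hω
    exact (Finset.mem_filter.1 hω).2

section Group

variable {G : Type*} [AddCommGroup G] [DecidableEq G]

theorem conv_eq_push {s t : Finset G} {p q : G → ℝ}
    (hp0 : ∀ x, x ∉ s → p x = 0) (hq0 : ∀ x, x ∉ t → q x = 0) :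
    conv p q = push (fun ab : G × G => ab.1 + ab.2) (s ×ˢ t) (fun ab => p ab.1 * q ab.2) := by
  funext z
  have hsupp : Function.support (fun x => p x * q (z - x)) ⊆ ↑s := by
    intro x hx
    by_contra hxs
    simp only [Function.mem_support] at hx
    exact hx (by rw [hp0 x hxs, zero_mul])
  rw [conv, finsum_eq_sum_of_support_subset _ hsupp]
  show _ = ∑ ab ∈ (s ×ˢ t) with ab.1 + ab.2 = z, p ab.1 * q ab.2
  rw [Finset.sum_filter, Finset.sum_product]
  refine Finset.sum_congr rfl fun a ha => ?_
  simp_rw [← eq_sub_iff_add_eq']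
  rw [Finset.sum_ite_eq' t (z - a) (fun b => p a * q b)]
  by_cases h : z - a ∈ t
  · simp [h]
  · simp [h, hq0 _ h]

end Group
theorem push_id {t : Finset α} {q : α → ℝ} (h0 : ∀ x, x ∉ t → q x = 0) :
    push id t q = q := by
  funext b
  show ∑ a ∈ t with a = b, q a = q b
  rw [Finset.sum_filter, Finset.sum_ite_eq' t b (fun a => q a)]
  by_cases h : b ∈ t
  · simp [h]
  · simp [h, h0 _ h]

theorem push_prodMap {f : α → β} {g : γ → δ} {s : Finset α} {t : Finset γ}
    {p : α → ℝ} {q : γ → ℝ} :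
    push (fun ac : α × γ => (f ac.1, g ac.2)) (s ×ˢ t) (fun ac => p ac.1 * q ac.2)
      = fun bd => push f s p bd.1 * push g t q bd.2 := by
  funext bd
  show ∑ ac ∈ (s ×ˢ t) with (f ac.1, g ac.2) = bd, p ac.1 * q ac.2
      = (∑ a ∈ s with f a = bd.1, p a) * (∑ c ∈ t with g c = bd.2, q c)
  rw [Finset.sum_filter, Finset.sum_product, Finset.sum_filter, Finset.sum_filter,
    Finset.sum_mul]
  simp_rw [Prod.ext_iff, ite_and]
  refine Finset.sum_congr rfl fun a _ => ?_
  by_cases h : f a = bd.1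
  · simp only [h, if_true, Finset.mul_sum, mul_ite, mul_zero]
  · simp [h]
section Group2

variable {G : Type*} [AddCommGroup G] [DecidableEq G]

theorem push_P2 {S T U : Finset G} {p q r : G → ℝ}
    (hp0 : ∀ x, x ∉ S → p x = 0) (hq0 : ∀ x, x ∉ T → q x = 0)
    (hr0 : ∀ x, x ∉ U → r x = 0) :
    push (fun ω : (G × G) × G => (ω.1.1, ω.1.2 + ω.2)) ((S ×ˢ T) ×ˢ U)
        (fun ω => p ω.1.1 * q ω.1.2 * r ω.2)
      = fun aw : G × G => p aw.1 * conv q r aw.2 := by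
  funext aw
  have hconv : conv q r aw.2 = ∑ y ∈ T, ∑ z ∈ U, (if y + z = aw.2 then q y * r z else 0) := by
    rw [conv_eq_push hq0 hr0]
    show (∑ yz ∈ (T ×ˢ U) with yz.1 + yz.2 = aw.2, q yz.1 * r yz.2) = _
    rw [Finset.sum_filter, Finset.sum_product]
  show (∑ ω ∈ ((S ×ˢ T) ×ˢ U) with (ω.1.1, ω.1.2 + ω.2) = aw, p ω.1.1 * q ω.1.2 * r ω.2)
      = p aw.1 * conv q r aw.2
  rw [Finset.sum_filter, Finset.sum_product]
  have hterm : ∀ (x y z : G),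
      (if ((x : G), y + z) = aw then p x * q y * r z else 0)
        = (if x = aw.1 then p x else 0) * (if y + z = aw.2 then q y * r z else 0) := by
    intro x y z
    by_cases h1 : x = aw.1 <;> by_cases h2 : y + z = aw.2 <;>
      simp [Prod.ext_iff, h1, h2, mul_assoc]
  calc ∑ v ∈ S ×ˢ T, ∑ z ∈ U,
        (if ((v.1, v.2 + z) : G × G) = aw then p v.1 * q v.2 * r z else 0)
      = ∑ v ∈ S ×ˢ T, ∑ z ∈ U,
          (if v.1 = aw.1 then p v.1 else 0) * (if v.2 + z = aw.2 then q v.2 * r z else 0) := by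
        refine Finset.sum_congr rfl fun v _ => Finset.sum_congr rfl fun z _ => hterm v.1 v.2 z
    _ = ∑ v ∈ S ×ˢ T, (if v.1 = aw.1 then p v.1 else 0) *
          ∑ z ∈ U, (if v.2 + z = aw.2 then q v.2 * r z else 0) := by
        refine Finset.sum_congr rfl fun v _ => ?_
        rw [Finset.mul_sum]
    _ = p aw.1 * conv q r aw.2 := by
        rw [Finset.sum_product]
        have : ∀ x ∈ S, (∑ y ∈ T, (if x = aw.1 then p x else 0) *
            ∑ z ∈ U, (if y + z = aw.2 then q y * r z else 0))
            = (if x = aw.1 then p x else 0) * conv q r aw.2 := by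
          intro x _
          rw [← Finset.mul_sum, hconv]
        rw [Finset.sum_congr rfl this, ← Finset.sum_mul,
          Finset.sum_ite_eq' S aw.1 (fun x => p x)]
        by_cases h : aw.1 ∈ S
        · simp [h]
        · simp [h, hp0 _ h]

end Group2
section KVH

variable {G : Type*} [AddCommGroup G] [DecidableEq G]

theorem kvh {p q r : G → ℝ} (hp : IsPMF p) (hq : IsPMF q) (hr : IsPMF r) :
    ent (conv (conv p q) r) + ent q ≤ ent (conv p q) + ent (conv q r) := by
  classical
  obtain ⟨S, hP⟩ : ∃ S : Finset G, PMFOn S p := ⟨_, pmfOn_of_isPMF hp⟩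
  obtain ⟨T, hQ⟩ : ∃ T : Finset G, PMFOn T q := ⟨_, pmfOn_of_isPMF hq⟩
  obtain ⟨U, hR⟩ : ∃ U : Finset G, PMFOn U r := ⟨_, pmfOn_of_isPMF hr⟩
  have hPQ : PMFOn (S ×ˢ T) (fun ab : G × G => p ab.1 * q ab.2) := pmfOn_prod hP hQ
  have hμ : PMFOn ((S ×ˢ T) ×ˢ U) (fun ω : (G × G) × G => p ω.1.1 * q ω.1.2 * r ω.2) :=
    pmfOn_prod hPQ hR
  have hcpq : conv p q = push (fun ab : G × G => ab.1 + ab.2) (S ×ˢ T)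
      (fun ab => p ab.1 * q ab.2) := conv_eq_push hP.2.1 hQ.2.1
  have hV : PMFOn ((S ×ˢ T).image (fun ab : G × G => ab.1 + ab.2)) (conv p q) := by
    rw [hcpq]; exact pmfOn_push hPQ
  have hW : PMFOn ((T ×ˢ U).image (fun ab : G × G => ab.1 + ab.2)) (conv q r) := by
    rw [conv_eq_push hQ.2.1 hR.2.1]; exact pmfOn_push (pmfOn_prod hQ hR)
  -- injectivity facts
  have he' : Function.Injective (fun v : G × G => (v.1 + v.2, v)) :=
    fun v v' h => congrArg Prod.snd h
  have he2 : Function.Injective (fun ac : G × G => (ac.1, ac.1 + ac.2)) := by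
    rintro ⟨a, c⟩ ⟨a', c'⟩ h
    have h1 : a = a' := congrArg Prod.fst h
    subst h1
    have h2 : a + c = a + c' := congrArg Prod.snd h
    rw [add_left_cancel h2]
  have he3 : Function.Injective (fun v : G × (G × G) => (v.1, (v.1 + v.2.1, v.2.2))) := by
    rintro ⟨a, b, c⟩ ⟨a', b', c'⟩ h
    simp only [Prod.mk.injEq] at h
    obtain ⟨rfl, h2, rfl⟩ := h
    rw [add_right_inj] at h2
    subst h2
    rfl
  have hF3 : Function.Injective (fun ω : (G × G) × G => (ω.1.1, (ω.1.2, ω.2))) := by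
    rintro ⟨⟨x, y⟩, z⟩ ⟨⟨x', y'⟩, z'⟩ h
    simp only [Prod.mk.injEq] at h
    obtain ⟨rfl, rfl, rfl⟩ := h
    rfl
  -- identification of the (s2, z) marginal
  have hm1 : push (fun ω : (G × G) × G => (ω.1.1 + ω.1.2, ω.2)) ((S ×ˢ T) ×ˢ U)
      (fun ω => p ω.1.1 * q ω.1.2 * r ω.2) = fun vw : G × G => conv p q vw.1 * r vw.2 := by
    funext vw
    have h := congrFun (push_prodMap (f := fun ab : G × G => ab.1 + ab.2) (g := id)
      (s := S ×ˢ T) (t := U) (p := fun ab : G × G => p ab.1 * q ab.2) (q := r)) vw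
    rw [push_id hR.2.1, ← hcpq] at h
    exact h
  -- identification of H(x+y+z)
  have eq1 : conv (conv p q) r = push (fun ω : (G × G) × G => ω.1.1 + ω.1.2 + ω.2)
      ((S ×ˢ T) ×ˢ U) (fun ω => p ω.1.1 * q ω.1.2 * r ω.2) := by
    have hsub : ((S ×ˢ T) ×ˢ U).image (fun ω : (G × G) × G => (ω.1.1 + ω.1.2, ω.2))
        ⊆ ((S ×ˢ T).image (fun ab : G × G => ab.1 + ab.2)) ×ˢ U := by
      intro b hb
      obtain ⟨ω, hω, rfl⟩ := Finset.mem_image.1 hb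
      exact Finset.mem_product.2 ⟨Finset.mem_image_of_mem _ (Finset.mem_product.1 hω).1,
        (Finset.mem_product.1 hω).2⟩
    rw [conv_eq_push hV.2.1 hR.2.1, ← hm1,
      push_superset hsub (fun b _ hb => push_eq_zero hb), push_push]
    rfl
  -- main submodularity inequality
  have main := submod (A := fun ω : (G × G) × G => ω.1.1)
    (B := fun ω : (G × G) × G => ω.1.1 + ω.1.2 + ω.2)
    (C := fun ω : (G × G) × G => (ω.1.1 + ω.1.2, ω.2)) hμ
  beta_reduce at main
  -- identify the four entropies
  have eAB : ent (push (fun ω : (G × G) × G => (ω.1.1, ω.1.1 + ω.1.2 + ω.2))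
      ((S ×ˢ T) ×ˢ U) (fun ω => p ω.1.1 * q ω.1.2 * r ω.2)) = ent p + ent (conv q r) := by
    have hfe : (fun ω : (G × G) × G => (ω.1.1, ω.1.1 + ω.1.2 + ω.2))
        = (fun ac : G × G => (ac.1, ac.1 + ac.2)) ∘
            (fun ω : (G × G) × G => (ω.1.1, ω.1.2 + ω.2)) := by
      funext ω
      simp only [Function.comp_apply, Prod.mk.injEq, true_and]
      rw [add_assoc]
    rw [hfe, ent_push_comp_inj he2, push_P2 hP.2.1 hQ.2.1 hR.2.1]
    exact ent_prod hP hW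
  have eBC : ent (push (fun ω : (G × G) × G => (ω.1.1 + ω.1.2 + ω.2, (ω.1.1 + ω.1.2, ω.2)))
      ((S ×ˢ T) ×ˢ U) (fun ω => p ω.1.1 * q ω.1.2 * r ω.2)) = ent (conv p q) + ent r := by
    have hfe : (fun ω : (G × G) × G => (ω.1.1 + ω.1.2 + ω.2, (ω.1.1 + ω.1.2, ω.2)))
        = (fun v : G × G => (v.1 + v.2, v)) ∘
            (fun ω : (G × G) × G => (ω.1.1 + ω.1.2, ω.2)) := rfl
    rw [hfe, ent_push_comp_inj he', hm1]
    exact ent_prod hV hR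
  have hACle : ent (push (fun ω : (G × G) × G => (ω.1.1, (ω.1.1 + ω.1.2, ω.2)))
        ((S ×ˢ T) ×ˢ U) (fun ω => p ω.1.1 * q ω.1.2 * r ω.2))
      ≤ ent (push (fun ω : (G × G) × G =>
          (ω.1.1, (ω.1.1 + ω.1.2 + ω.2, (ω.1.1 + ω.1.2, ω.2))))
        ((S ×ˢ T) ×ˢ U) (fun ω => p ω.1.1 * q ω.1.2 * r ω.2)) := by
    have hfe : (fun ω : (G × G) × G => (ω.1.1, (ω.1.1 + ω.1.2, ω.2)))
        = (fun v : G × (G × (G × G)) => (v.1, v.2.2)) ∘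
            (fun ω : (G × G) × G =>
              (ω.1.1, (ω.1.1 + ω.1.2 + ω.2, (ω.1.1 + ω.1.2, ω.2)))) := rfl
    rw [hfe]
    exact ent_push_comp_le hμ.1
  have eAC : ent (push (fun ω : (G × G) × G => (ω.1.1, (ω.1.1 + ω.1.2, ω.2)))
      ((S ×ˢ T) ×ˢ U) (fun ω => p ω.1.1 * q ω.1.2 * r ω.2))
      = ent p + ent q + ent r := by
    have hfe : (fun ω : (G × G) × G => (ω.1.1, (ω.1.1 + ω.1.2, ω.2)))
        = (fun v : G × (G × G) => (v.1, (v.1 + v.2.1, v.2.2))) ∘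
            (fun ω : (G × G) × G => (ω.1.1, (ω.1.2, ω.2))) := rfl
    rw [hfe, ent_push_comp_inj he3, ent_push_inj hF3.injOn hμ.2.1]
    have h1 : ent (fun ω : (G × G) × G => p ω.1.1 * q ω.1.2 * r ω.2)
        = ent (fun ab : G × G => p ab.1 * q ab.2) + ent r := ent_prod hPQ hR
    rw [h1, ent_prod hP hQ]
  rw [eAB, eBC] at main
  rw [← eq1] at main
  linarith [main, hACle, eAC]

end KVH
section Final

variable {G : Type*} [AddCommGroup G]

theorem isPMF_conv {p q : G → ℝ} (hp : IsPMF p) (hq : IsPMF q) : IsPMF (conv p q) := by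
  classical
  obtain ⟨S, hP⟩ : ∃ S : Finset G, PMFOn S p := ⟨_, pmfOn_of_isPMF hp⟩
  obtain ⟨T, hQ⟩ : ∃ T : Finset G, PMFOn T q := ⟨_, pmfOn_of_isPMF hq⟩
  rw [conv_eq_push hP.2.1 hQ.2.1]
  exact isPMF_of_pmfOn (pmfOn_push (pmfOn_prod hP hQ))

theorem isPMF_delta0 {p : G → ℝ} : IsPMF (iterConv p 0) := by
  refine ⟨fun x => Set.indicator_nonneg (fun _ _ => zero_le_one) x, ?_, ?_⟩
  · exact (Set.finite_singleton (0:G)).subset Set.support_indicator_subset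
  · show ∑ᶠ x, Set.indicator ({0} : Set G) (fun _ => (1:ℝ)) x = 1
    rw [← finsum_mem_def, finsum_mem_singleton]

theorem isPMF_iterConv {p : G → ℝ} (hp : IsPMF p) : ∀ n, IsPMF (iterConv p n)
  | 0 => isPMF_delta0
  | n + 1 => isPMF_conv (isPMF_iterConv hp n) hp

theorem iterConv_one {p : G → ℝ} : iterConv p 1 = p := by
  funext z
  show conv (iterConv p 0) p z = p z
  rw [conv, finsum_eq_single _ (0 : G) ?_]
  · show Set.indicator ({0} : Set G) (fun _ => (1:ℝ)) 0 * p (z - 0) = p z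
    rw [Set.indicator_of_mem (Set.mem_singleton 0), one_mul, sub_zero]
  · intro x hx
    show Set.indicator ({0} : Set G) (fun _ => (1:ℝ)) x * p (z - x) = 0
    rw [Set.indicator_of_notMem (by simpa using hx), zero_mul]

theorem conv_comm (p q : G → ℝ) : conv p q = conv q p := by
  funext z
  have h1 : conv p q z = ∑ᶠ x, p (z - x) * q x := by
    rw [conv, ← finsum_comp_equiv (Equiv.subLeft z)]
    apply finsum_congr
    intro x
    show p (z - x) * q (z - (z - x)) = p (z - x) * q x
    rw [sub_sub_cancel]
  rw [h1, conv]
  exact finsum_congr fun x => mul_comm _ _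

end Final

end EIB

/-- `H((n+1)X) - H(nX) ≤ (1/n)(H((n+1)X) - H(X))`; in particular the entropy
increments `H((j+1)X) - H(jX)` are non-increasing in `j`. -/
theorem entropy_increment_bound {G : Type*} [AddCommGroup G] (p : G → ℝ) (hp : IsPMF p)
    (n : ℕ) (hn : 1 ≤ n) :
    ent (iterConv p (n + 1)) - ent (iterConv p n) ≤
        (1 / n) * (ent (iterConv p (n + 1)) - ent p) ∧
      ∀ j k : ℕ, 1 ≤ j → j ≤ k →
        ent (iterConv p (k + 1)) - ent (iterConv p k) ≤
          ent (iterConv p (j + 1)) - ent (iterConv p j) := by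
  classical
  have hiter := EIB.isPMF_iterConv hp
  have step : ∀ k : ℕ, ent (iterConv p (k + 2)) + ent (iterConv p k)
      ≤ 2 * ent (iterConv p (k + 1)) := by
    intro k
    have h := EIB.kvh hp (hiter k) hp
    rw [EIB.conv_comm p (iterConv p k)] at h
    have e1 : conv (iterConv p k) p = iterConv p (k + 1) := rfl
    rw [e1] at h
    have e2 : conv (iterConv p (k + 1)) p = iterConv p (k + 2) := rfl
    rw [e2] at h
    linarith
  have dec : ∀ j k : ℕ, j ≤ k →
      ent (iterConv p (k + 1)) - ent (iterConv p k) ≤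
        ent (iterConv p (j + 1)) - ent (iterConv p j) := by
    intro j k hjk
    induction k, hjk using Nat.le_induction with
    | base => exact le_refl _
    | succ m hm ih =>
      have := step m
      have e : m + 1 + 1 = m + 2 := rfl
      rw [e]
      linarith
  refine ⟨?_, fun j k h1j hjk => dec j k hjk⟩
  have key : ∀ m : ℕ, 1 ≤ m →
      (m : ℝ) * (ent (iterConv p (m + 1)) - ent (iterConv p m))
        ≤ ent (iterConv p (m + 1)) - ent (iterConv p 1) := by
    intro m hm
    induction m, hm using Nat.le_induction with
    | base => norm_num
    | succ m hm ih =>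
      have hd := dec m (m + 1) (Nat.le_succ m)
      have hmul := mul_le_mul_of_nonneg_left hd (by positivity : (0:ℝ) ≤ (m : ℝ))
      push_cast
      nlinarith [ih, hmul]
  have hkey := key n hn
  rw [EIB.iterConv_one] at hkey
  have hn' : (0:ℝ) < (n : ℝ) := by exact_mod_cast Nat.pos_of_ne_zero (by omega)
  rw [one_div, inv_mul_eq_div, le_div_iff₀ hn']
  linarith
end
end

section
/- Let X, Y be independent finitely supported G-valued random variables with H(X+Y) - H(Y) <= 1/16. Then the set S = {x in supp(X) : D_KL(x+Y || X+Y) <= 1/8} satisfies P(X in S) >= 1/2, and for all x1, x2 in S, ||p_{x1+Y} - p_{x2+Y}||_1 <= 1. -/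
open scoped BigOperators Pointwise
noncomputable section

/-- Kullback–Leibler divergence of pmfs. -/
def KL {α : Type*} (p q : α → ℝ) : ℝ := ∑ᶠ x, p x * Real.log (p x / q x)

lemma log_mono_aux : MonotoneOn (fun t : ℝ => Real.log t - 2*(t-1)/(t+1)) (Set.Ioi 0) := by
  apply monotoneOn_of_hasDerivWithinAt_nonneg (convex_Ioi 0)
    (f' := fun t => t⁻¹ - 4/(t+1)^2)
  · apply ContinuousOn.sub
    · exact Real.continuousOn_log.mono (fun t ht => ne_of_gt ht)
    · apply ContinuousOn.div (by fun_prop) (by fun_prop)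
      intro t ht
      have : (0:ℝ) < t := ht
      positivity
  · intro t ht
    rw [interior_Ioi] at ht
    have h0 : (0:ℝ) < t := ht
    have hne : t + 1 ≠ 0 := by positivity
    have hq : HasDerivAt (fun t : ℝ => 2*(t-1)/(t+1)) (4/(t+1)^2) t := by
      have h1' : HasDerivAt (fun t : ℝ => 2*(t-1)) 2 t := by
        simpa using ((hasDerivAt_id t).sub_const 1).const_mul (2:ℝ)
      have h2' : HasDerivAt (fun t : ℝ => t+1) 1 t := (hasDerivAt_id t).add_const 1
      have := h1'.div h2' hne
      refine this.congr_deriv ?_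
      ring
    exact ((Real.hasDerivAt_log (ne_of_gt h0)).sub hq).hasDerivWithinAt
  · intro t ht
    rw [interior_Ioi] at ht
    have h0 : (0:ℝ) < t := ht
    have h1 : (0:ℝ) < (t+1)^2 := by positivity
    have h2 : 4/(t+1)^2 ≤ t⁻¹ := by
      rw [inv_eq_one_div, div_le_div_iff₀ h1 h0]
      nlinarith [sq_nonneg (t-1)]
    linarith

lemma log_ge_ratio {t : ℝ} (ht : 1 ≤ t) : 2*(t-1)/(t+1) ≤ Real.log t := by
  have h := log_mono_aux (Set.mem_Ioi.2 one_pos)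
    (Set.mem_Ioi.2 (lt_of_lt_of_le one_pos ht)) ht
  simp only [Real.log_one] at h
  norm_num at h
  linarith

lemma log_le_ratio {t : ℝ} (h0 : 0 < t) (ht : t ≤ 1) : Real.log t ≤ 2*(t-1)/(t+1) := by
  have h := log_mono_aux (Set.mem_Ioi.2 h0) (Set.mem_Ioi.2 one_pos) ht
  simp only [Real.log_one] at h
  norm_num at h
  linarith

lemma g_hasDeriv {t : ℝ} (ht : 0 < t) :
    HasDerivAt (fun t : ℝ => t*Real.log t - t + 1 - 3*(t-1)^2/(2*(t+2)))
      (Real.log t - 3*(t-1)*(t+5)/(2*(t+2)^2)) t := by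
  have hne : (2:ℝ)*(t+2) ≠ 0 := by positivity
  have h1 : HasDerivAt (fun t : ℝ => t * Real.log t) (Real.log t + 1) t := by
    have := (hasDerivAt_id t).mul (Real.hasDerivAt_log (ne_of_gt ht))
    exact this.congr_deriv (by simp [ht.ne'])
  have h2 : HasDerivAt (fun t : ℝ => 3*(t-1)^2) (6*(t-1)) t := by
    have := (((hasDerivAt_id t).sub_const 1).pow 2).const_mul (3:ℝ)
    exact this.congr_deriv (by simp; ring)
  have h3 : HasDerivAt (fun t : ℝ => 2*(t+2)) 2 t := by
    simpa using ((hasDerivAt_id t).add_const 2).const_mul (2:ℝ)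
  have h4 := h2.div h3 hne
  have h5 := ((h1.sub (hasDerivAt_id t)).add_const 1).sub h4
  refine h5.congr_deriv ?_
  have h6 : (2*(t+2))^2 ≠ 0 := by positivity
  field_simp
  ring

lemma g_nonneg {t : ℝ} (ht : 0 ≤ t) : 3*(t-1)^2/(2*(t+2)) ≤ t*Real.log t - t + 1 := by
  set f : ℝ → ℝ := fun t => t*Real.log t - t + 1 - 3*(t-1)^2/(2*(t+2)) with hfdef
  have hcont : ∀ s : Set ℝ, s ⊆ Set.Ici 0 → ContinuousOn f s := by
    intro s hs
    apply ContinuousOn.sub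
    · exact Continuous.continuousOn (by fun_prop)
    · apply ContinuousOn.div (by fun_prop) (by fun_prop)
      intro x hx
      have : (0:ℝ) ≤ x := hs hx
      positivity
  have hf1 : f 1 = 0 := by simp [hfdef]
  suffices h : 0 ≤ f t by
    rw [hfdef] at h
    dsimp only at h
    linarith
  rcases le_or_gt t 1 with hle | hlt
  · have hanti : AntitoneOn f (Set.Icc 0 1) := by
      apply antitoneOn_of_hasDerivWithinAt_nonpos (convex_Icc 0 1)
        (f' := fun t => Real.log t - 3*(t-1)*(t+5)/(2*(t+2)^2))
        (hcont _ (fun x hx => hx.1))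
      · intro x hx
        rw [interior_Icc] at hx
        exact (g_hasDeriv hx.1).hasDerivWithinAt
      · intro x hx
        rw [interior_Icc] at hx
        obtain ⟨hx0, hx1⟩ := hx
        have ha : Real.log x ≤ 2*(x-1)/(x+1) := log_le_ratio hx0 hx1.le
        have hb : 2*(x-1)/(x+1) ≤ 3*(x-1)*(x+5)/(2*(x+2)^2) := by
          rw [div_le_div_iff₀ (by linarith) (by positivity)]
          nlinarith [sq_nonneg (x-1), hx0.le, hx1.le]
        linarith
    have := hanti (Set.mem_Icc.2 ⟨ht, hle⟩) (Set.mem_Icc.2 ⟨zero_le_one, le_refl 1⟩) hle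
    rw [hf1] at this
    exact this
  · have hmono : MonotoneOn f (Set.Ici 1) := by
      apply monotoneOn_of_hasDerivWithinAt_nonneg (convex_Ici 1)
        (f' := fun t => Real.log t - 3*(t-1)*(t+5)/(2*(t+2)^2))
        (hcont _ (fun x hx => Set.mem_Ici.2 (le_trans (zero_le_one (α := ℝ)) hx)))
      · intro x hx
        rw [interior_Ici] at hx
        exact (g_hasDeriv (lt_trans one_pos hx)).hasDerivWithinAt
      · intro x hx
        rw [interior_Ici] at hx
        rw [Set.mem_Ioi] at hx
        have h1 : (1:ℝ) ≤ x := hx.le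
        have ha : 2*(x-1)/(x+1) ≤ Real.log x := log_ge_ratio h1
        have hb : 3*(x-1)*(x+5)/(2*(x+2)^2) ≤ 2*(x-1)/(x+1) := by
          rw [div_le_div_iff₀ (by positivity) (by linarith)]
          nlinarith [sq_nonneg (x-1), h1]
        linarith
    have := hmono (Set.mem_Ici.2 (le_refl 1)) (Set.mem_Ici.2 hlt.le) hlt.le
    rw [hf1] at this
    exact this

lemma pointwise_kl {a b : ℝ} (ha : 0 ≤ a) (hb : 0 ≤ b) (hab : a ≠ 0 → b ≠ 0) :
    3*(a-b)^2/(2*(a+2*b)) ≤ a*Real.log (a/b) - a + b := by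
  rcases eq_or_lt_of_le hb with hb0 | hb0
  · have ha0 : a = 0 := by
      by_contra h
      exact (hab h) hb0.symm
    simp [ha0, ← hb0]
  · have hbne : b ≠ 0 := ne_of_gt hb0
    have ht : 0 ≤ a / b := div_nonneg ha hb
    have h := mul_le_mul_of_nonneg_left (g_nonneg ht) hb
    have e1 : b * (3*((a/b)-1)^2/(2*((a/b)+2))) = 3*(a-b)^2/(2*(a+2*b)) := by
      have h2 : a + 2*b ≠ 0 := by positivity
      field_simp
    have e2 : b * ((a/b)*Real.log (a/b) - (a/b) + 1) = a*Real.log (a/b) - a + b := by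
      field_simp
    rw [e1, e2] at h
    exact h

lemma gibbs_sum {α : Type*} (S : Finset α) (p q : α → ℝ)
    (hp0 : ∀ x ∈ S, 0 ≤ p x) (hq0 : ∀ x ∈ S, 0 ≤ q x)
    (hpq : ∀ x ∈ S, p x ≠ 0 → q x ≠ 0)
    (hp1 : ∑ x ∈ S, p x = 1) (hq1 : ∑ x ∈ S, q x ≤ 1) :
    0 ≤ ∑ x ∈ S, p x * Real.log (p x / q x) := by
  have key : ∀ x ∈ S, p x - q x ≤ p x * Real.log (p x / q x) := by
    intro x hx
    rcases eq_or_lt_of_le (hp0 x hx) with h0 | h0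
    · simp [← h0]
      exact hq0 x hx
    · have hq0' : 0 < q x := lt_of_le_of_ne (hq0 x hx) (Ne.symm (hpq x hx (ne_of_gt h0)))
      have hd : 0 < p x / q x := div_pos h0 hq0'
      have := Real.one_sub_inv_le_log_of_pos hd
      have hinv : (p x / q x)⁻¹ = q x / p x := by
        rw [inv_div]
      rw [hinv] at this
      have := mul_le_mul_of_nonneg_left this (hp0 x hx)
      calc p x - q x = p x * (1 - q x / p x) := by field_simp
        _ ≤ p x * Real.log (p x / q x) := this
  calc (0:ℝ) = 1 - 1 := by norm_num
    _ ≤ ∑ x ∈ S, p x - ∑ x ∈ S, q x := by rw [hp1]; linarith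
    _ = ∑ x ∈ S, (p x - q x) := (Finset.sum_sub_distrib _ _).symm
    _ ≤ ∑ x ∈ S, p x * Real.log (p x / q x) := Finset.sum_le_sum key

lemma pinsker_sum {α : Type*} (S : Finset α) (p q : α → ℝ)
    (hp0 : ∀ x ∈ S, 0 ≤ p x) (hq0 : ∀ x ∈ S, 0 ≤ q x)
    (hpq : ∀ x ∈ S, p x ≠ 0 → q x ≠ 0)
    (hp1 : ∑ x ∈ S, p x = 1) (hq1 : ∑ x ∈ S, q x = 1) :
    (∑ x ∈ S, |p x - q x|)^2 ≤ 2 * ∑ x ∈ S, p x * Real.log (p x / q x) := by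
  set f : α → ℝ := fun x => |p x - q x| * Real.sqrt (3/(2*(p x + 2*q x))) with hf
  set g : α → ℝ := fun x => Real.sqrt (2*(p x + 2*q x)/3) with hg
  have hw : ∀ x ∈ S, 0 ≤ p x + 2*q x := by
    intro x hx
    have := hp0 x hx; have := hq0 x hx
    linarith
  have hfg : ∀ x ∈ S, f x * g x = |p x - q x| := by
    intro x hx
    rcases eq_or_lt_of_le (hw x hx) with h0 | h0
    · have hp' : p x = 0 := by nlinarith [hp0 x hx, hq0 x hx]
      have hq' : q x = 0 := by nlinarith [hp0 x hx, hq0 x hx]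
      simp [hf, hg, hp', hq']
    · rw [hf, hg]
      dsimp only
      rw [mul_assoc, ← Real.sqrt_mul (by positivity)]
      have : 3 / (2 * (p x + 2 * q x)) * (2 * (p x + 2 * q x) / 3) = 1 := by
        field_simp
      rw [this, Real.sqrt_one, mul_one]
  have hcs := Finset.sum_mul_sq_le_sq_mul_sq S f g
  rw [Finset.sum_congr rfl hfg] at hcs
  have hf2 : ∀ x ∈ S, f x ^ 2 = 3*(p x - q x)^2/(2*(p x + 2*q x)) := by
    intro x hx
    rw [hf]
    dsimp only
    rw [mul_pow, sq_abs, Real.sq_sqrt (div_nonneg (by norm_num) (by nlinarith [hw x hx]))]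
    ring
  have hg2 : ∀ x ∈ S, g x ^ 2 = 2*(p x + 2*q x)/3 := by
    intro x hx
    rw [hg]
    dsimp only
    rw [Real.sq_sqrt (div_nonneg (by nlinarith [hw x hx]) (by norm_num))]
  rw [Finset.sum_congr rfl hf2, Finset.sum_congr rfl hg2] at hcs
  have hgsum : ∑ x ∈ S, 2*(p x + 2*q x)/3 = 2 := by
    have e : ∀ x ∈ S, 2*(p x + 2*q x)/3 = (2/3)*p x + (4/3)*q x := by
      intro x _; ring
    rw [Finset.sum_congr rfl e, Finset.sum_add_distrib, ← Finset.mul_sum, ← Finset.mul_sum,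
      hp1, hq1]
    norm_num
  rw [hgsum] at hcs
  have hT : ∑ x ∈ S, 3*(p x - q x)^2/(2*(p x + 2*q x))
      ≤ ∑ x ∈ S, p x * Real.log (p x / q x) := by
    have h := Finset.sum_le_sum (fun x hx => pointwise_kl (hp0 x hx) (hq0 x hx) (hpq x hx))
    have e : ∑ x ∈ S, (p x * Real.log (p x / q x) - p x + q x)
        = (∑ x ∈ S, p x * Real.log (p x / q x)) - (∑ x ∈ S, p x) + (∑ x ∈ S, q x) := by
      rw [Finset.sum_add_distrib, Finset.sum_sub_distrib]
    rw [e, hp1, hq1] at h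
    linarith
  calc (∑ x ∈ S, |p x - q x|)^2
      ≤ (∑ x ∈ S, 3*(p x - q x)^2/(2*(p x + 2*q x))) * 2 := hcs
    _ ≤ (∑ x ∈ S, p x * Real.log (p x / q x)) * 2 := by linarith
    _ = 2 * ∑ x ∈ S, p x * Real.log (p x / q x) := by ring

lemma sum_translate0 {G : Type*} [AddCommGroup G] (F : G → ℝ) (x : G) (B C : Finset G)
    (hF : Function.support F ⊆ ↑B) (hBC : ∀ w ∈ B, w + x ∈ C) :
    ∑ z ∈ C, F (z - x) = ∑ w ∈ B, F w := by
  have h1 : Function.support (fun z => F (z - x)) ⊆ ↑C := by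
    intro z hz
    have hm : z - x ∈ B := hF hz
    have h2 := hBC _ hm
    rwa [sub_add_cancel] at h2
  rw [← finsum_eq_sum_of_support_subset _ h1, ← finsum_eq_sum_of_support_subset F hF]
  exact finsum_comp_equiv (Equiv.subRight x)


/-- if `X, Y` are independent with `H(X+Y) - H(Y) ≤ 1/16`, then the set
`S = {x ∈ supp X : D_KL(x + Y ‖ X + Y) ≤ 1/8}` satisfies `P(X ∈ S) ≥ 1/2` and
`‖p_{x₁+Y} - p_{x₂+Y}‖₁ ≤ 1` for all `x₁, x₂ ∈ S`. -/
theorem almost_period_set {G : Type*} [AddCommGroup G] (p q : G → ℝ)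
    (hp : IsPMF p) (hq : IsPMF q)
    (hsmall : ent (conv p q) - ent q ≤ 1 / 16) :
    (1 : ℝ) / 2 ≤
        (∑ᶠ x ∈ {x : G | x ∈ Function.support p ∧
          KL (fun z => q (z - x)) (conv p q) ≤ 1 / 8}, p x) ∧
      ∀ x₁ ∈ {x : G | x ∈ Function.support p ∧
          KL (fun z => q (z - x)) (conv p q) ≤ 1 / 8},
        ∀ x₂ ∈ {x : G | x ∈ Function.support p ∧
          KL (fun z => q (z - x)) (conv p q) ≤ 1 / 8},
        ∑ᶠ z, |q (z - x₁) - q (z - x₂)| ≤ 1 := by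
  classical
  obtain ⟨hp0, hpfin, hp1⟩ := hp
  obtain ⟨hq0, hqfin, hq1⟩ := hq
  set r : G → ℝ := conv p q with hrdef
  set A : Finset G := hpfin.toFinset with hAdef
  set B : Finset G := hqfin.toFinset with hBdef
  set C : Finset G := A + B with hCdef
  have hAmem : ∀ x, x ∈ A ↔ p x ≠ 0 := fun x => by
    rw [hAdef, Set.Finite.mem_toFinset, Function.mem_support]
  have hBmem : ∀ x, x ∈ B ↔ q x ≠ 0 := fun x => by
    rw [hBdef, Set.Finite.mem_toFinset, Function.mem_support]
  have hp_supp_A : Function.support p ⊆ ↑A := fun x hx => (hAmem x).2 hx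
  have hq_supp_B : Function.support q ⊆ ↑B := fun x hx => (hBmem x).2 hx
  have hr_eq : ∀ z, r z = ∑ x ∈ A, p x * q (z - x) := by
    intro z
    rw [hrdef]
    apply finsum_eq_sum_of_support_subset
    intro y hy
    rw [Function.mem_support] at hy
    rw [Finset.mem_coe, hAmem]
    intro h
    apply hy
    rw [h, zero_mul]
  have hr0 : ∀ z, 0 ≤ r z := fun z => by
    rw [hr_eq]
    exact Finset.sum_nonneg fun i _ => mul_nonneg (hp0 i) (hq0 _)
  have hsum_p : ∑ x ∈ A, p x = 1 := by
    rw [← finsum_eq_sum_of_support_subset p hp_supp_A]; exact hp1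
  have hsum_q : ∑ w ∈ B, q w = 1 := by
    rw [← finsum_eq_sum_of_support_subset q hq_supp_B]; exact hq1
  have htrans : ∀ x ∈ A, ∀ w ∈ B, w + x ∈ C := by
    intro x hx w hw
    rw [hCdef, add_comm w x]
    exact Finset.add_mem_add hx hw
  have hsum_qx : ∀ x ∈ A, ∑ z ∈ C, q (z - x) = 1 := fun x hx => by
    rw [sum_translate0 q x B C hq_supp_B (htrans x hx), hsum_q]
  have hsum_r : ∑ z ∈ C, r z = 1 := by
    calc ∑ z ∈ C, r z = ∑ z ∈ C, ∑ x ∈ A, p x * q (z - x) :=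
          Finset.sum_congr rfl fun z _ => hr_eq z
      _ = ∑ x ∈ A, ∑ z ∈ C, p x * q (z - x) := Finset.sum_comm
      _ = ∑ x ∈ A, p x * ∑ z ∈ C, q (z - x) := by
          apply Finset.sum_congr rfl
          intro x _
          rw [Finset.mul_sum]
      _ = ∑ x ∈ A, p x := by
          apply Finset.sum_congr rfl
          intro x hx
          rw [hsum_qx x hx, mul_one]
      _ = 1 := hsum_p
  have hr_pos : ∀ x z, p x ≠ 0 → q (z - x) ≠ 0 → r z ≠ 0 := by
    intro x z hpx hqz
    have hx : x ∈ A := (hAmem x).2 hpx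
    have hterm : 0 < p x * q (z - x) :=
      mul_pos (lt_of_le_of_ne (hp0 x) (Ne.symm hpx)) (lt_of_le_of_ne (hq0 _) (Ne.symm hqz))
    have hle := Finset.single_le_sum (f := fun y => p y * q (z - y))
      (fun i _ => mul_nonneg (hp0 i) (hq0 _)) hx
    have : 0 < r z := by
      rw [hr_eq]
      exact lt_of_lt_of_le hterm hle
    exact ne_of_gt this
  have hsuppx : ∀ x ∈ A, ∀ z : G, q (z - x) ≠ 0 → z ∈ C := by
    intro x hx z hz
    have hm : z - x ∈ B := (hBmem _).2 hz
    have h2 := htrans x hx _ hm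
    rwa [sub_add_cancel] at h2
  have hKL_eq : ∀ x ∈ A,
      KL (fun z => q (z - x)) r = ∑ z ∈ C, q (z - x) * Real.log (q (z - x) / r z) := by
    intro x hx
    apply finsum_eq_sum_of_support_subset
    intro z hz
    rw [Function.mem_support] at hz
    have hqz : q (z - x) ≠ 0 := by
      intro h
      apply hz
      simp [h]
    exact hsuppx x hx z hqz
  have hKL0 : ∀ x ∈ A, 0 ≤ KL (fun z => q (z - x)) r := by
    intro x hx
    rw [hKL_eq x hx]
    exact gibbs_sum C _ r (fun z _ => hq0 _) (fun z _ => hr0 z)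
      (fun z _ hqz => hr_pos x z ((hAmem x).1 hx) hqz) (hsum_qx x hx) (le_of_eq hsum_r)
  -- entropy identities
  have hEnt_q : ent q = - ∑ w ∈ B, q w * Real.log (q w) := by
    rw [ent, finsum_eq_sum_of_support_subset _ (s := B)
      (fun w hw => by
        rw [Function.mem_support] at hw
        apply hq_supp_B
        rw [Function.mem_support]
        intro h
        apply hw
        rw [h, zero_mul, neg_zero]), Finset.sum_neg_distrib]
  have hr_supp_C : Function.support r ⊆ ↑C := by
    intro z hz
    rw [Function.mem_support, hr_eq] at hz
    obtain ⟨x, hx, hne⟩ := Finset.exists_ne_zero_of_sum_ne_zero hz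
    exact hsuppx x hx z (fun h => hne (by rw [h, mul_zero]))
  have hEnt_r : ent r = - ∑ z ∈ C, r z * Real.log (r z) := by
    rw [ent, finsum_eq_sum_of_support_subset _ (s := C)
      (fun z hz => by
        rw [Function.mem_support] at hz
        apply hr_supp_C
        rw [Function.mem_support]
        intro h
        apply hz
        rw [h, zero_mul, neg_zero]), Finset.sum_neg_distrib]
  have hident : ∑ x ∈ A, p x * KL (fun z => q (z - x)) r = ent r - ent q := by
    have hlog_split : ∀ x ∈ A, ∀ z : G, q (z - x) * Real.log (q (z - x) / r z)
        = q (z - x) * Real.log (q (z - x)) - q (z - x) * Real.log (r z) := by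
      intro x hx z
      rcases eq_or_ne (q (z - x)) 0 with h | h
      · rw [h]; ring
      · rw [Real.log_div h (hr_pos x z ((hAmem x).1 hx) h)]; ring
    have hsum_qlogq : ∀ x ∈ A, ∑ z ∈ C, q (z - x) * Real.log (q (z - x))
        = ∑ w ∈ B, q w * Real.log (q w) := by
      intro x hx
      exact sum_translate0 (fun w => q w * Real.log (q w)) x B C
        (fun w hw => by
          rw [Function.mem_support] at hw
          apply hq_supp_B
          rw [Function.mem_support]
          intro h
          apply hw
          rw [h, zero_mul]) (htrans x hx)
    calc ∑ x ∈ A, p x * KL (fun z => q (z - x)) r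
        = ∑ x ∈ A, (p x * ∑ z ∈ C, q (z - x) * Real.log (q (z - x))
            - p x * ∑ z ∈ C, q (z - x) * Real.log (r z)) := by
          apply Finset.sum_congr rfl
          intro x hx
          rw [hKL_eq x hx, Finset.sum_congr rfl (fun z _ => hlog_split x hx z),
            Finset.sum_sub_distrib, mul_sub]
      _ = (∑ x ∈ A, p x * ∑ w ∈ B, q w * Real.log (q w))
            - ∑ x ∈ A, p x * ∑ z ∈ C, q (z - x) * Real.log (r z) := by
          rw [Finset.sum_sub_distrib]
          congr 1
          exact Finset.sum_congr rfl fun x hx => by rw [hsum_qlogq x hx]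
      _ = (∑ w ∈ B, q w * Real.log (q w)) - ∑ z ∈ C, r z * Real.log (r z) := by
          congr 1
          · rw [← Finset.sum_mul, hsum_p, one_mul]
          · calc ∑ x ∈ A, p x * ∑ z ∈ C, q (z - x) * Real.log (r z)
                = ∑ x ∈ A, ∑ z ∈ C, p x * (q (z - x) * Real.log (r z)) := by
                  apply Finset.sum_congr rfl
                  intro x _
                  rw [Finset.mul_sum]
              _ = ∑ z ∈ C, ∑ x ∈ A, p x * (q (z - x) * Real.log (r z)) := Finset.sum_comm
              _ = ∑ z ∈ C, r z * Real.log (r z) := by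
                  apply Finset.sum_congr rfl
                  intro z _
                  rw [hr_eq z, Finset.sum_mul]
                  apply Finset.sum_congr rfl
                  intro x _
                  ring
      _ = ent r - ent q := by rw [hEnt_q, hEnt_r]; ring
  -- the filtered set
  set Sf : Finset G := A.filter (fun x => KL (fun z => q (z - x)) r ≤ 1/8) with hSfdef
  have hSeq : {x : G | x ∈ Function.support p ∧
      KL (fun z => q (z - x)) r ≤ 1 / 8} = ↑Sf := by
    ext x
    simp only [Set.mem_setOf_eq, Finset.coe_filter, hSfdef, Function.mem_support]
    rw [hAmem]
  have hsub : Sf ⊆ A := Finset.filter_subset _ _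
  have hmarkov : ∑ x ∈ A \ Sf, p x ≤ 1/2 := by
    have key : (1/8 : ℝ) * ∑ x ∈ A \ Sf, p x ≤ 1/16 := by
      calc (1/8 : ℝ) * ∑ x ∈ A \ Sf, p x = ∑ x ∈ A \ Sf, p x * (1/8) := by
            rw [mul_comm, Finset.sum_mul]
        _ ≤ ∑ x ∈ A \ Sf, p x * KL (fun z => q (z - x)) r := by
            apply Finset.sum_le_sum
            intro x hx
            have hxA : x ∈ A := (Finset.mem_sdiff.1 hx).1
            have hxn : ¬ (KL (fun z => q (z - x)) r ≤ 1/8) := by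
              have h2 := (Finset.mem_sdiff.1 hx).2
              rw [hSfdef, Finset.mem_filter] at h2
              intro hc
              exact h2 ⟨hxA, hc⟩
            exact mul_le_mul_of_nonneg_left (le_of_lt (lt_of_not_ge hxn)) (hp0 x)
        _ ≤ ∑ x ∈ A, p x * KL (fun z => q (z - x)) r :=
            Finset.sum_le_sum_of_subset_of_nonneg (Finset.sdiff_subset)
              (fun x hx _ => mul_nonneg (hp0 x) (hKL0 x hx))
        _ = ent r - ent q := hident
        _ ≤ 1/16 := hsmall
    linarith
  constructor
  · rw [hSeq, finsum_mem_coe_finset]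
    have h3 : ∑ x ∈ A \ Sf, p x + ∑ x ∈ Sf, p x = 1 := by
      rw [Finset.sum_sdiff hsub, hsum_p]
    linarith
  · intro x₁ hx₁ x₂ hx₂
    rw [Set.mem_setOf_eq] at hx₁ hx₂
    have hx₁A : x₁ ∈ A := (hAmem _).2 hx₁.1
    have hx₂A : x₂ ∈ A := (hAmem _).2 hx₂.1
    have hdist : ∀ x, x ∈ A → KL (fun z => q (z - x)) r ≤ 1/8 →
        ∑ z ∈ C, |q (z - x) - r z| ≤ 1/2 := by
      intro x hx hkl
      have hpin := pinsker_sum C (fun z => q (z - x)) r (fun z _ => hq0 _) (fun z _ => hr0 z)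
        (fun z _ hqz => hr_pos x z ((hAmem x).1 hx) hqz) (hsum_qx x hx) hsum_r
      rw [← hKL_eq x hx] at hpin
      have hnn : 0 ≤ ∑ z ∈ C, |q (z - x) - r z| := Finset.sum_nonneg fun z _ => abs_nonneg _
      nlinarith [hpin, hkl, hnn]
    have hsupp2 : Function.support (fun z => |q (z - x₁) - q (z - x₂)|) ⊆ ↑C := by
      intro z hz
      rw [Function.mem_support] at hz
      have hor : q (z - x₁) ≠ 0 ∨ q (z - x₂) ≠ 0 := by
        by_contra h
        push_neg at h
        apply hz
        rw [h.1, h.2, sub_zero, abs_zero]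
      rcases hor with h | h
      · exact hsuppx x₁ hx₁A z h
      · exact hsuppx x₂ hx₂A z h
    rw [finsum_eq_sum_of_support_subset _ hsupp2]
    calc ∑ z ∈ C, |q (z - x₁) - q (z - x₂)|
        ≤ ∑ z ∈ C, (|q (z - x₁) - r z| + |q (z - x₂) - r z|) := by
          apply Finset.sum_le_sum
          intro z _
          have h1 := abs_sub_le (q (z - x₁)) (r z) (q (z - x₂))
          rw [abs_sub_comm (r z) (q (z - x₂))] at h1
          exact h1
      _ = (∑ z ∈ C, |q (z - x₁) - r z|) + ∑ z ∈ C, |q (z - x₂) - r z| :=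
          Finset.sum_add_distrib
      _ ≤ 1/2 + 1/2 := add_le_add (hdist x₁ hx₁A hx₁.2) (hdist x₂ hx₂A hx₂.2)
      _ = 1 := by norm_num
end
end

section
/- Let Y be a finitely supported G-valued random variable, gamma: G -> S^1 a character with |hat{p_Y}(gamma)|^2 >= 1 - eps^2/2 for some eps in (0,1), and let x1, x2 in G satisfy: the sum over x of min(p_{x1+Y}(x), p_{x2+Y}(x)) >= 1/2. Then |1 - gamma(x1 - x2)| <= 4 eps. -/
open scoped BigOperators Pointwise
noncomputable section

/-- Fourier coefficient of a (finitely supported) density at a character `γ : G → S¹`. -/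
def fourierAt {G : Type*} [AddCommGroup G] (p : G → ℝ) (γ : AddChar G Circle) : ℂ :=
  ∑ᶠ x, (p x : ℂ) * (starRingEnd ℂ) (γ x : ℂ)

set_option maxHeartbeats 1000000 in
/-- if `|p̂_Y(γ)|² ≥ 1 - ε²/2` and
`∑ₓ min(p_{x₁+Y}(x), p_{x₂+Y}(x)) ≥ 1/2`, then `|1 - γ(x₁ - x₂)| ≤ 4ε`. -/
theorem character_almost_constant {G : Type*} [AddCommGroup G] (q : G → ℝ) (hq : IsPMF q)
    (γ : AddChar G Circle) (ε : ℝ) (hε0 : 0 < ε) (hε1 : ε < 1)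
    (hγ : 1 - ε ^ 2 / 2 ≤ ‖fourierAt q γ‖ ^ 2)
    (x₁ x₂ : G)
    (hmin : (1 : ℝ) / 2 ≤ ∑ᶠ x, min (q (x - x₁)) (q (x - x₂))) :
    ‖1 - (γ (x₁ - x₂) : ℂ)‖ ≤ 4 * ε := by
  classical
  obtain ⟨hq0, hqfin, hqsum⟩ := hq
  set s : Finset G := hqfin.toFinset with hs
  have hsupp : ∀ x, x ∉ s → q x = 0 := by
    intro x hx
    by_contra h
    exact hx (hqfin.mem_toFinset.2 h)
  set g : G → ℂ := fun y => (starRingEnd ℂ) (γ y : ℂ) with hg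
  have hgabs : ∀ y, ‖g y‖ = 1 := by
    intro y; simp [hg, Circle.norm_coe]
  set f : ℂ := fourierAt q γ with hfdef
  have hf : f = ∑ x ∈ s, (q x : ℂ) * g x := by
    rw [hfdef, fourierAt]
    apply finsum_eq_sum_of_support_subset
    intro x hx
    simp only [Function.mem_support] at hx
    by_contra hxs
    rw [hsupp x hxs] at hx
    simp at hx
  have hqsum' : ∑ x ∈ s, q x = 1 := by
    rw [← hqsum]
    exact (finsum_eq_sum_of_support_subset q (by intro x hx; exact hqfin.mem_toFinset.2 hx)).symm
  have habs_pos : 0 < ‖f‖ := by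
    nlinarith [norm_nonneg f, sq_nonneg (‖f‖)]
  set c : ℂ := f / (‖f‖ : ℂ) with hc
  have hcabs : ‖c‖ = 1 := by
    rw [hc, norm_div, Complex.norm_real, Real.norm_eq_abs, abs_of_pos habs_pos, div_self habs_pos.ne']
  have hre : (f * (starRingEnd ℂ) c).re = ‖f‖ := by
    rw [hc, map_div₀, Complex.conj_ofReal]
    rw [div_eq_mul_inv, ← mul_assoc, Complex.mul_conj]
    rw [Complex.normSq_eq_norm_sq, Complex.ofReal_pow]
    have h9 : ((‖f‖ : ℂ) ^ 2 * ((‖f‖ : ℝ) : ℂ)⁻¹) = ((‖f‖ : ℝ) : ℂ) := by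
      rw [sq]
      field_simp
    rw [h9, Complex.ofReal_re]
  set A : ℝ := ∑ x ∈ s, q x * ‖g x - c‖ ^ 2 with hA
  have hAval : A = 2 - 2 * ‖f‖ := by
    have hterm : ∀ x, q x * ‖g x - c‖ ^ 2
        = 2 * q x - 2 * (((q x : ℂ) * g x) * (starRingEnd ℂ) c).re := by
      intro x
      rw [Complex.sq_norm, Complex.normSq_sub]
      have h1 : Complex.normSq (g x) = 1 := by
        rw [← Complex.sq_norm, hgabs]; norm_num
      have h2 : Complex.normSq c = 1 := by
        rw [← Complex.sq_norm, hcabs]; norm_num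
      rw [h1, h2]
      have h3 : (((q x : ℂ) * g x) * (starRingEnd ℂ) c).re
          = q x * (g x * (starRingEnd ℂ) c).re := by
        rw [mul_assoc, Complex.re_ofReal_mul]
      rw [h3]
      ring
    rw [hA]
    calc ∑ x ∈ s, q x * ‖g x - c‖ ^ 2
        = ∑ x ∈ s, (2 * q x - 2 * (((q x : ℂ) * g x) * (starRingEnd ℂ) c).re) :=
          Finset.sum_congr rfl (fun x _ => hterm x)
      _ = 2 * (∑ x ∈ s, q x) - 2 * (∑ x ∈ s, (((q x : ℂ) * g x) * (starRingEnd ℂ) c).re) := by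
          rw [Finset.sum_sub_distrib, Finset.mul_sum, Finset.mul_sum]
      _ = 2 - 2 * ((f * (starRingEnd ℂ) c).re) := by
          have hsum2 : (∑ x ∈ s, (((q x : ℂ) * g x) * (starRingEnd ℂ) c).re)
              = (f * (starRingEnd ℂ) c).re := by
            rw [← Complex.re_sum, ← Finset.sum_mul, ← hf]
          rw [hqsum', hsum2]
          ring
      _ = 2 - 2 * ‖f‖ := by rw [hre]
  have hfgt : 1 - ε ^ 2 / 2 < ‖f‖ := by
    have h1 : Real.sqrt (1 - ε ^ 2 / 2) ≤ ‖f‖ := by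
      have h2 := Real.sqrt_le_sqrt hγ
      rwa [Real.sqrt_sq (norm_nonneg f)] at h2
    have h2 : 1 - ε ^ 2 / 2 < Real.sqrt (1 - ε ^ 2 / 2) := by
      set u := Real.sqrt (1 - ε ^ 2 / 2) with hu
      have hsq : u ^ 2 = 1 - ε ^ 2 / 2 := Real.sq_sqrt (by nlinarith)
      have hu0 : 0 ≤ u := Real.sqrt_nonneg _
      have hu1 : u < 1 := by nlinarith
      have hu0' : 0 < u := by nlinarith
      nlinarith [mul_pos hu0' (sub_pos.2 hu1)]
    linarith
  have hAlt : A < ε ^ 2 := by rw [hAval]; linarith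
  set m : G → ℝ := fun x => min (q (x - x₁)) (q (x - x₂)) with hm
  have hm0 : ∀ x, 0 ≤ m x := fun x => le_min (hq0 _) (hq0 _)
  set T : Finset G := s.image (· + x₁) ∪ s.image (· + x₂) with hT
  have hmsupp : Function.support m ⊆ ↑T := by
    intro x hx
    simp only [Function.mem_support, hm] at hx
    have h1 : q (x - x₁) ≠ 0 := by
      intro h
      apply hx
      rw [h]
      exact le_antisymm (min_le_left _ _) (le_min le_rfl (hq0 _))
    have hmem : x - x₁ ∈ s := hqfin.mem_toFinset.2 h1
    simp only [hT, Finset.coe_union, Set.mem_union, Finset.coe_image, Set.mem_image,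
      Finset.mem_coe]
    left
    exact ⟨x - x₁, hmem, by abel⟩
  have hmsum : (1:ℝ)/2 ≤ ∑ x ∈ T, m x := by
    rwa [← finsum_eq_sum_of_support_subset m hmsupp]
  have hshift : ∀ x₀ : G, ∑ x ∈ T, q (x - x₀) * ‖g (x - x₀) - c‖ ^ 2 ≤ A := by
    intro x₀
    have hinj : ∀ a ∈ T, ∀ b ∈ T, a + (-x₀) = b + (-x₀) → a = b := by
      intro a _ b _ h
      simpa using h
    calc ∑ x ∈ T, q (x - x₀) * ‖g (x - x₀) - c‖ ^ 2
        = ∑ y ∈ T.image (· + (-x₀)), q y * ‖g y - c‖ ^ 2 := by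
          rw [Finset.sum_image hinj]
          apply Finset.sum_congr rfl
          intro x _
          simp [sub_eq_add_neg]
      _ ≤ ∑ y ∈ T.image (· + (-x₀)) ∪ s, q y * ‖g y - c‖ ^ 2 := by
          apply Finset.sum_le_sum_of_subset_of_nonneg Finset.subset_union_left
          intro y _ _
          exact mul_nonneg (hq0 y) (sq_nonneg _)
      _ = A := by
          rw [hA]
          exact (Finset.sum_subset Finset.subset_union_right
            (fun y _ hy => by rw [hsupp y hy, zero_mul])).symm
  set F : G → ℝ := fun x => ‖g (x - x₁) - c‖ ^ 2 + ‖g (x - x₂) - c‖ ^ 2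
    with hF
  have hFsum : ∑ x ∈ T, m x * F x ≤ 2 * A := by
    calc ∑ x ∈ T, m x * F x
        ≤ ∑ x ∈ T, (q (x - x₁) * ‖g (x - x₁) - c‖ ^ 2
            + q (x - x₂) * ‖g (x - x₂) - c‖ ^ 2) := by
          apply Finset.sum_le_sum
          intro x _
          simp only [hF, hm]
          have h1 : min (q (x - x₁)) (q (x - x₂)) ≤ q (x - x₁) := min_le_left _ _
          have h2 : min (q (x - x₁)) (q (x - x₂)) ≤ q (x - x₂) := min_le_right _ _
          nlinarith [sq_nonneg (‖g (x - x₁) - c‖),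
            sq_nonneg (‖g (x - x₂) - c‖)]
      _ = (∑ x ∈ T, q (x - x₁) * ‖g (x - x₁) - c‖ ^ 2)
            + (∑ x ∈ T, q (x - x₂) * ‖g (x - x₂) - c‖ ^ 2) :=
          Finset.sum_add_distrib
      _ ≤ 2 * A := by
          have h1 := hshift x₁
          have h2 := hshift x₂
          linarith
  have hex : ∃ x, F x ≤ 4 * ε ^ 2 := by
    by_contra hcon
    push_neg at hcon
    have hge : ∑ x ∈ T, m x * (4 * ε ^ 2) ≤ ∑ x ∈ T, m x * F x := by
      apply Finset.sum_le_sum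
      intro x _
      exact mul_le_mul_of_nonneg_left (le_of_lt (hcon x)) (hm0 x)
    rw [← Finset.sum_mul] at hge
    nlinarith [hmsum, hFsum, hAlt, sq_nonneg ε]
  obtain ⟨x, hx⟩ := hex
  simp only [hF] at hx
  have hb1 : ‖g (x - x₁) - c‖ ≤ 2 * ε := by
    nlinarith [norm_nonneg (g (x - x₁) - c), sq_nonneg (‖g (x - x₂) - c‖)]
  have hb2 : ‖g (x - x₂) - c‖ ≤ 2 * ε := by
    nlinarith [norm_nonneg (g (x - x₂) - c), sq_nonneg (‖g (x - x₁) - c‖)]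
  have hkey : (γ (x - x₂) : ℂ) = (γ (x - x₁) : ℂ) * (γ (x₁ - x₂) : ℂ) := by
    have h0 : x - x₂ = (x - x₁) + (x₁ - x₂) := by abel
    rw [h0, AddChar.map_add_eq_mul, Circle.coe_mul]
  have h5 : ((γ (x - x₁) : ℂ)) - (γ (x - x₂) : ℂ)
      = (γ (x - x₁) : ℂ) * (1 - (γ (x₁ - x₂) : ℂ)) := by
    rw [hkey]; ring
  have h6 : ‖1 - (γ (x₁ - x₂) : ℂ)‖
      = ‖(γ (x - x₁) : ℂ) - (γ (x - x₂) : ℂ)‖ := by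
    rw [h5, norm_mul, Circle.norm_coe, one_mul]
  have h7 : ‖(γ (x - x₁) : ℂ) - (γ (x - x₂) : ℂ)‖
      = ‖g (x - x₁) - g (x - x₂)‖ := by
    simp only [hg]
    rw [← map_sub, Complex.norm_conj]
  have h8 : ‖g (x - x₁) - g (x - x₂)‖
      ≤ ‖g (x - x₁) - c‖ + ‖c - g (x - x₂)‖ := by
    have h9 : g (x - x₁) - g (x - x₂) = (g (x - x₁) - c) + (c - g (x - x₂)) := by ring
    rw [h9]
    exact norm_add_le _ _
  have h10 : ‖c - g (x - x₂)‖ = ‖g (x - x₂) - c‖ :=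
    norm_sub_rev _ _
  rw [h6, h7]
  calc ‖g (x - x₁) - g (x - x₂)‖
      ≤ ‖g (x - x₁) - c‖ + ‖c - g (x - x₂)‖ := h8
    _ ≤ 2 * ε + 2 * ε := by rw [h10]; linarith
    _ = 4 * ε := by ring
end
end

section
/- Upper bound on Bohr set size from polynomial growth: Let A be a finite subset of a finite abelian group G, X a random variable supported on A, and suppose parameters d >= 1, eps in (0,1), m, l in N satisfy (1 - eps^2/2)^m <= (1/2) exp(-d log(l m) - 30 d log d) and H(m l X + U_A) - H(U_A) <= d log(m l) + 30 d log d. Then |B(LSpec(l X, eps), 1/2)| <= 8 |A| exp(d log(l m) + 30 d log d), where LSpec(Y, eps) = {gamma : |hat{p_Y}(gamma)|^2 >= 1 - eps^2/2}. -/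
open scoped BigOperators Pointwise
noncomputable section

/-- The Bohr set `B(S, ρ)`. -/
def bohrSet (G : Type*) [AddCommGroup G] (S : Set (AddChar G Circle)) (ρ : ℝ) : Set G :=
  {x | ∀ γ ∈ S, ‖(γ x : ℂ) - 1‖ ≤ ρ}

/-- The uniform distribution on a finite set `A`. -/
def unif {G : Type*} [DecidableEq G] (A : Finset G) : G → ℝ :=
  fun x => if x ∈ A then (A.card : ℝ)⁻¹ else 0

/-- The 99% large spectrum `LSpec(X, ε) = {γ : |p̂_X(γ)|² ≥ 1 - ε²/2}`. -/
def LSpec {G : Type*} [AddCommGroup G] (p : G → ℝ) (ε : ℝ) : Set (AddChar G Circle) :=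
  {γ | 1 - ε ^ 2 / 2 ≤ ‖fourierAt p γ‖ ^ 2}

set_option linter.unusedSectionVars false
set_option linter.unusedVariables false

section Helpers
open Finset
variable {G : Type*} [AddCommGroup G] [Fintype G] [DecidableEq G]

noncomputable instance : Fintype (AddChar G Circle) :=
  Fintype.ofEquiv (AddChar G ℂ) AddChar.circleEquivComplex.symm.toEquiv

lemma card_addChar_circle : Fintype.card (AddChar G Circle) = Fintype.card G := by
  rw [← AddChar.card_eq (α := G)]
  exact Fintype.card_congr AddChar.circleEquivComplex.toEquiv

lemma sum_char_apply (a : G) :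
    ∑ γ : AddChar G Circle, ((γ a : ℂ)) = if a = 0 then (Fintype.card G : ℂ) else 0 := by
  rw [← AddChar.sum_apply_eq_ite]
  exact Fintype.sum_equiv AddChar.circleEquivComplex.toEquiv _ _ (fun γ => rfl)

lemma sum_apply_char (γ : AddChar G Circle) :
    ∑ x : G, ((γ x : ℂ)) = if γ = 0 then (Fintype.card G : ℂ) else 0 := by
  classical
  have h := AddChar.sum_eq_ite (AddChar.circleEquivComplex γ)
  simp only [EmbeddingLike.map_eq_zero_iff] at h
  exact h

lemma conv_apply (f g : G → ℝ) (z : G) : conv f g z = ∑ x, f x * g (z - x) :=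
  finsum_eq_sum_of_fintype _

lemma ent_eq (f : G → ℝ) : ent f = ∑ x, -(f x * Real.log (f x)) :=
  finsum_eq_sum_of_fintype _

lemma fourierAt_eq (f : G → ℝ) (γ : AddChar G Circle) :
    fourierAt f γ = ∑ x, (f x : ℂ) * (starRingEnd ℂ) (γ x : ℂ) :=
  finsum_eq_sum_of_fintype _

lemma conv_nonneg' {f g : G → ℝ} (hf : ∀ x, 0 ≤ f x) (hg : ∀ x, 0 ≤ g x) (z : G) :
    0 ≤ conv f g z := by
  rw [conv_apply]; exact Finset.sum_nonneg fun x _ => mul_nonneg (hf x) (hg _)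

lemma sum_conv (f g : G → ℝ) : ∑ z, conv f g z = (∑ x, f x) * (∑ x, g x) := by
  simp_rw [conv_apply]
  rw [Finset.sum_comm, Finset.sum_mul]
  refine Finset.sum_congr rfl fun x _ => ?_
  rw [← Finset.mul_sum]
  congr 1
  exact Fintype.sum_equiv (Equiv.subRight x) _ _ (fun z => rfl)

lemma iterConv_nonneg {f : G → ℝ} (hf : ∀ x, 0 ≤ f x) (n : ℕ) (z : G) : 0 ≤ iterConv f n z := by
  induction n generalizing z with
  | zero => exact Set.indicator_nonneg (fun _ _ => zero_le_one) _
  | succ n ih => exact conv_nonneg' ih hf z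

lemma sum_iterConv {f : G → ℝ} (hf : ∑ x, f x = 1) (n : ℕ) : ∑ x, iterConv f n x = 1 := by
  induction n with
  | zero =>
      classical
      simp [iterConv, Set.indicator_apply]
  | succ n ih => rw [iterConv, sum_conv, ih, hf, one_mul]

lemma conj_char_add (γ : AddChar G Circle) (x y : G) :
    (starRingEnd ℂ) ((γ (x + y) : ℂ)) = (starRingEnd ℂ) (γ x : ℂ) * (starRingEnd ℂ) (γ y : ℂ) := by
  rw [AddChar.map_add_eq_mul]
  push_cast
  rw [map_mul]

lemma fourierAt_conv (f g : G → ℝ) (γ : AddChar G Circle) :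
    fourierAt (conv f g) γ = fourierAt f γ * fourierAt g γ := by
  simp only [fourierAt_eq, conv_apply]
  push_cast
  simp_rw [Finset.sum_mul]
  rw [Finset.sum_comm]
  refine Finset.sum_congr rfl fun x _ => ?_
  rw [Finset.mul_sum]
  refine Fintype.sum_equiv (Equiv.subRight x) _ _ (fun z => ?_)
  simp only [Equiv.subRight_apply]
  have hz : x + (z - x) = z := by abel
  calc (f x : ℂ) * (g (z - x) : ℂ) * (starRingEnd ℂ) (γ z : ℂ)
      = (f x : ℂ) * (g (z - x) : ℂ) * (starRingEnd ℂ) ((γ (x + (z - x)) : ℂ)) := by rw [hz]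
    _ = (f x : ℂ) * (starRingEnd ℂ) (γ x : ℂ) * ((g (z - x) : ℂ) * (starRingEnd ℂ) (γ (z - x) : ℂ)) := by
        rw [conj_char_add]; ring

lemma fourierAt_iterConv (f : G → ℝ) (n : ℕ) (γ : AddChar G Circle) :
    fourierAt (iterConv f n) γ = (fourierAt f γ) ^ n := by
  induction n with
  | zero =>
      classical
      simp only [iterConv, fourierAt_eq, pow_zero, Set.indicator_apply]
      rw [Finset.sum_eq_single 0]
      · simp
      · intro b _ hb; simp [hb]
      · intro h; simp at h
  | succ n ih => rw [iterConv, fourierAt_conv, ih, pow_succ]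

lemma abs_fourierAt_le_one {f : G → ℝ} (h0 : ∀ x, 0 ≤ f x) (h1 : ∑ x, f x = 1)
    (γ : AddChar G Circle) : ‖fourierAt f γ‖ ≤ 1 := by
  rw [fourierAt_eq]
  calc ‖∑ x, (f x : ℂ) * (starRingEnd ℂ) (γ x : ℂ)‖
      ≤ ∑ x, ‖(f x : ℂ) * (starRingEnd ℂ) (γ x : ℂ)‖ :=
        norm_sum_le _ _
    _ = ∑ x, f x := by
        refine Finset.sum_congr rfl fun x _ => ?_
        rw [norm_mul, Complex.norm_conj, Circle.norm_coe, mul_one, Complex.norm_real, Real.norm_eq_abs,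
          abs_of_nonneg (h0 x)]
    _ = 1 := h1

lemma char_sub_coe (γ : AddChar G Circle) (x y : G) :
    ((γ (y - x) : ℂ)) = (γ y : ℂ) * (starRingEnd ℂ) (γ x : ℂ) := by
  rw [sub_eq_add_neg, AddChar.map_add_eq_mul, AddChar.map_neg_eq_inv, ← Circle.coe_inv_eq_conj]
  push_cast
  ring

lemma parseval (f : G → ℝ) :
    ∑ γ : AddChar G Circle, ‖fourierAt f γ‖ ^ 2
      = Fintype.card G * ∑ x, f x ^ 2 := by
  classical
  have conj_sum : ∀ γ : AddChar G Circle,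
      (starRingEnd ℂ) (fourierAt f γ) = ∑ y, (f y : ℂ) * (γ y : ℂ) := by
    intro γ
    rw [fourierAt_eq, map_sum]
    refine Finset.sum_congr rfl fun y _ => ?_
    rw [map_mul, Complex.conj_ofReal, Complex.conj_conj]
  have key : ∑ γ : AddChar G Circle, fourierAt f γ * (starRingEnd ℂ) (fourierAt f γ)
      = (Fintype.card G : ℂ) * ∑ x, (f x : ℂ) ^ 2 := by
    calc ∑ γ : AddChar G Circle, fourierAt f γ * (starRingEnd ℂ) (fourierAt f γ)
        = ∑ γ : AddChar G Circle, ∑ x, ∑ y,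
            ((f x : ℂ) * (starRingEnd ℂ) (γ x : ℂ)) * ((f y : ℂ) * (γ y : ℂ)) := by
          refine Finset.sum_congr rfl fun γ _ => ?_
          rw [conj_sum, fourierAt_eq, Finset.sum_mul_sum]
      _ = ∑ x, ∑ y, ∑ γ : AddChar G Circle,
            ((f x : ℂ) * (starRingEnd ℂ) (γ x : ℂ)) * ((f y : ℂ) * (γ y : ℂ)) := by
          rw [Finset.sum_comm]
          exact Finset.sum_congr rfl fun x _ => Finset.sum_comm
      _ = ∑ x, ∑ y, (f x : ℂ) * (f y : ℂ) * ∑ γ : AddChar G Circle, ((γ (y - x) : ℂ)) := by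
          refine Finset.sum_congr rfl fun x _ => Finset.sum_congr rfl fun y _ => ?_
          rw [Finset.mul_sum]
          refine Finset.sum_congr rfl fun γ _ => ?_
          rw [char_sub_coe]; ring
      _ = ∑ x, ∑ y, (f x : ℂ) * (f y : ℂ)
            * (if y = x then (Fintype.card G : ℂ) else 0) := by
          refine Finset.sum_congr rfl fun x _ => Finset.sum_congr rfl fun y _ => ?_
          rw [sum_char_apply]
          simp only [sub_eq_zero]
      _ = ∑ x, (f x : ℂ) * (f x : ℂ) * (Fintype.card G : ℂ) := by
          refine Finset.sum_congr rfl fun x _ => ?_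
          rw [Finset.sum_eq_single x]
          · simp
          · intro b _ hb; simp [hb]
          · intro h; simp at h
      _ = (Fintype.card G : ℂ) * ∑ x, (f x : ℂ) ^ 2 := by
          rw [Finset.mul_sum]; refine Finset.sum_congr rfl fun x _ => by ring
  have key2 : (↑(∑ γ : AddChar G Circle, ‖fourierAt f γ‖ ^ 2) : ℂ)
      = ((Fintype.card G * ∑ x, f x ^ 2 : ℝ) : ℂ) := by
    push_cast
    rw [← key]
    refine Finset.sum_congr rfl fun γ _ => ?_
    rw [Complex.mul_conj]
    norm_cast
    exact Complex.sq_norm _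
  exact_mod_cast key2

lemma exp_neg_ent_le {f : G → ℝ} (h0 : ∀ x, 0 ≤ f x) (h1 : ∑ x, f x = 1) :
    Real.exp (-ent f) ≤ ∑ x, f x ^ 2 := by
  have heq : Real.exp (-ent f) = ∏ x, f x ^ (f x) := by
    have hent : -ent f = ∑ x, f x * Real.log (f x) := by
      rw [ent_eq, ← Finset.sum_neg_distrib]
      simp
    rw [hent, Real.exp_sum]
    refine Finset.prod_congr rfl fun x _ => ?_
    rcases eq_or_lt_of_le (h0 x) with h | h
    · rw [← h]; simp
    · rw [Real.rpow_def_of_pos h, mul_comm]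
  rw [heq]
  calc ∏ x, f x ^ (f x) ≤ ∑ x, f x * f x :=
        Real.geom_mean_le_arith_mean_weighted Finset.univ f f (fun i _ => h0 i) h1
          (fun i _ => h0 i)
    _ = ∑ x, f x ^ 2 := by refine Finset.sum_congr rfl fun x _ => (sq (f x)).symm ▸ by ring

lemma unif_nonneg (A : Finset G) (x : G) : 0 ≤ unif A x := by
  unfold unif; split <;> positivity

lemma sum_unif {A : Finset G} (hA : A.Nonempty) : ∑ x, unif A x = 1 := by
  unfold unif
  rw [Finset.sum_ite_mem, Finset.univ_inter, Finset.sum_const, nsmul_eq_mul]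
  rw [mul_inv_cancel₀]
  exact_mod_cast (Finset.card_pos.mpr hA).ne'

lemma sum_sq_unif {A : Finset G} (hA : A.Nonempty) : ∑ x, unif A x ^ 2 = (A.card : ℝ)⁻¹ := by
  have hc : (0:ℝ) < A.card := by exact_mod_cast Finset.card_pos.mpr hA
  unfold unif
  simp only [ite_pow, zero_pow, OfNat.ofNat_ne_zero, ne_eq, not_false_iff]
  rw [Finset.sum_ite_mem, Finset.univ_inter, Finset.sum_const, nsmul_eq_mul]
  field_simp

lemma ent_unif {A : Finset G} (hA : A.Nonempty) : ent (unif A) = Real.log A.card := by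
  have hc : (0:ℝ) < A.card := by exact_mod_cast Finset.card_pos.mpr hA
  rw [ent_eq]
  unfold unif
  have : ∀ x : G, -((if x ∈ A then (A.card : ℝ)⁻¹ else 0) *
      Real.log (if x ∈ A then (A.card : ℝ)⁻¹ else 0))
      = if x ∈ A then (A.card : ℝ)⁻¹ * Real.log A.card else 0 := by
    intro x; split
    · rw [Real.log_inv]; ring
    · simp
  simp_rw [this]
  rw [Finset.sum_ite_mem, Finset.univ_inter, Finset.sum_const, nsmul_eq_mul]
  field_simp

lemma bohr_card_bound (Γ : Finset (AddChar G Circle)) (B : Finset G)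
    (hB : ∀ x ∈ B, ∀ γ ∈ Γ, ‖(γ x : ℂ) - 1‖ ≤ 1/2) :
    (B.card : ℝ) * ((Γ.card : ℝ)/2)^2 ≤ Fintype.card G * Γ.card := by
  classical
  set S : G → ℂ := fun x => ∑ γ ∈ Γ, (γ x : ℂ) with hS
  have step1 : ∑ x : G, ‖S x‖ ^ 2 = (Fintype.card G : ℝ) * Γ.card := by
    have key : ∑ x : G, S x * (starRingEnd ℂ) (S x)
        = (Fintype.card G : ℂ) * Γ.card := by
      calc ∑ x : G, S x * (starRingEnd ℂ) (S x)
          = ∑ x : G, ∑ γ ∈ Γ, ∑ δ ∈ Γ, ((γ x : ℂ)) * (starRingEnd ℂ) ((δ x : ℂ)) := by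
            refine Finset.sum_congr rfl fun x _ => ?_
            rw [hS, map_sum, Finset.sum_mul_sum]
        _ = ∑ γ ∈ Γ, ∑ δ ∈ Γ, ∑ x : G, (((γ - δ) x : ℂ)) := by
            rw [Finset.sum_comm]
            refine Finset.sum_congr rfl fun γ _ => ?_
            rw [Finset.sum_comm]
            refine Finset.sum_congr rfl fun δ _ => Finset.sum_congr rfl fun x _ => ?_
            rw [AddChar.sub_apply, AddChar.map_neg_eq_inv, Circle.coe_mul,
              Circle.coe_inv_eq_conj]
        _ = ∑ γ ∈ Γ, ∑ δ ∈ Γ, if γ - δ = 0 then (Fintype.card G : ℂ) else 0 := by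
            refine Finset.sum_congr rfl fun γ _ => Finset.sum_congr rfl fun δ _ => ?_
            exact sum_apply_char (γ - δ)
        _ = ∑ γ ∈ Γ, ∑ δ ∈ Γ, if δ = γ then (Fintype.card G : ℂ) else 0 := by
            simp only [sub_eq_zero]
            refine Finset.sum_congr rfl fun γ _ => Finset.sum_congr rfl fun δ _ => ?_
            simp only [eq_comm]
        _ = ∑ γ ∈ Γ, (Fintype.card G : ℂ) := by
            refine Finset.sum_congr rfl fun γ hγ => ?_
            rw [Finset.sum_ite_eq' Γ γ (fun _ => (Fintype.card G : ℂ)), if_pos hγ]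
        _ = (Fintype.card G : ℂ) * Γ.card := by
            rw [Finset.sum_const, nsmul_eq_mul]; ring
    have key2 : (↑(∑ x : G, ‖S x‖ ^ 2) : ℂ)
        = ((Fintype.card G * Γ.card : ℝ) : ℂ) := by
      push_cast
      rw [← key]
      refine Finset.sum_congr rfl fun x _ => ?_
      rw [Complex.mul_conj]
      norm_cast
      exact Complex.sq_norm _
    exact_mod_cast key2
  have step2 : ∀ x ∈ B, (Γ.card : ℝ)/2 ≤ ‖S x‖ := by
    intro x hx
    have hre : (Γ.card : ℝ)/2 ≤ (S x).re := by
      rw [hS]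
      calc (Γ.card : ℝ)/2 = ∑ _γ ∈ Γ, (1/2 : ℝ) := by
            rw [Finset.sum_const, nsmul_eq_mul]; ring
        _ ≤ ∑ γ ∈ Γ, ((γ x : ℂ)).re := by
            refine Finset.sum_le_sum fun γ hγ => ?_
            have h1 := hB x hx γ hγ
            have h2 : 1 - ((γ x : ℂ)).re ≤ ‖(γ x : ℂ) - 1‖ := by
              calc 1 - ((γ x : ℂ)).re = (-((γ x : ℂ) - 1)).re := by simp
                _ ≤ ‖-((γ x : ℂ) - 1)‖ := Complex.re_le_norm _
                _ = ‖(γ x : ℂ) - 1‖ := by rw [norm_neg]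
            linarith
        _ = (∑ γ ∈ Γ, (γ x : ℂ)).re := by rw [Complex.re_sum]
    exact hre.trans (Complex.re_le_norm _)
  calc (B.card : ℝ) * ((Γ.card : ℝ)/2)^2
      = ∑ _x ∈ B, ((Γ.card : ℝ)/2)^2 := by rw [Finset.sum_const, nsmul_eq_mul]
    _ ≤ ∑ x ∈ B, ‖S x‖ ^ 2 := by
        refine Finset.sum_le_sum fun x hx => ?_
        have := step2 x hx
        have h0 : (0:ℝ) ≤ (Γ.card : ℝ)/2 := by positivity
        nlinarith
    _ ≤ ∑ x : G, ‖S x‖ ^ 2 := by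
        refine Finset.sum_le_sum_of_subset_of_nonneg (Finset.subset_univ B) ?_
        intro x _ _; positivity
    _ = (Fintype.card G : ℝ) * Γ.card := step1

end Helpers
set_option maxHeartbeats 2000000 in
theorem bohr_upper_bound_aux {G : Type*} [AddCommGroup G] [Fintype G] [DecidableEq G]
    (A : Finset G) (hA : A.Nonempty) (p : G → ℝ) (hp : IsPMF p)
    (hsupp : Function.support p ⊆ (A : Set G))
    (d ε : ℝ) (m l : ℕ) (hd : 1 ≤ d) (hε0 : 0 < ε) (hε1 : ε < 1) (hm : 1 ≤ m) (hl : 1 ≤ l)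
    (h1 : (1 - ε ^ 2 / 2) ^ m ≤
      (1 / 2) * Real.exp (-(d * Real.log (l * m)) - 30 * d * Real.log d))
    (h2 : ent (conv (iterConv p (m * l)) (unif A)) - ent (unif A) ≤
      d * Real.log (m * l) + 30 * d * Real.log d) :
    (Nat.card (bohrSet G (LSpec (iterConv p l) ε) (1 / 2)) : ℝ) ≤
      8 * A.card * Real.exp (d * Real.log (l * m) + 30 * d * Real.log d) := by
  classical
  obtain ⟨hp0, -, hp1'⟩ := hp
  have hp1 : ∑ x : G, p x = 1 := by rw [← finsum_eq_sum_of_fintype]; exact hp1'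
  push_cast at h1 h2 ⊢
  set q : G → ℝ := iterConv p l with hq
  set r : G → ℝ := conv (iterConv p (m * l)) (unif A) with hr
  set K : ℝ := d * Real.log ((l : ℝ) * (m : ℝ)) + 30 * d * Real.log d with hK
  have hApos : (0:ℝ) < A.card := by exact_mod_cast Finset.card_pos.mpr hA
  have hGpos : (0:ℝ) < Fintype.card G := by exact_mod_cast Fintype.card_pos
  have hr0 : ∀ x, 0 ≤ r x := conv_nonneg' (iterConv_nonneg hp0 _) (unif_nonneg A)
  have hr1 : ∑ x : G, r x = 1 := by
    rw [hr, sum_conv, sum_iterConv hp1, sum_unif hA, one_mul]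
  -- normalize h1, h2
  have hK1 : (1 - ε ^ 2 / 2) ^ m ≤ (1/2) * Real.exp (-K) := by
    have e : -(d * Real.log ((l : ℝ) * (m : ℝ))) - 30 * d * Real.log d = -K := by
      rw [hK]; ring
    rwa [e] at h1
  have hK2 : ent r ≤ Real.log A.card + K := by
    rw [ent_unif hA] at h2
    have hcomm : Real.log ((m:ℝ) * (l:ℝ)) = Real.log ((l:ℝ) * (m:ℝ)) := by rw [mul_comm]
    rw [hcomm] at h2
    rw [hK]; linarith
  -- entropy lower bound on ∑ r²
  have hexp : Real.exp (-K) / A.card ≤ ∑ x : G, r x ^ 2 := by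
    refine le_trans ?_ (exp_neg_ent_le hr0 hr1)
    have hlog : Real.exp (-Real.log (A.card : ℝ)) = (A.card:ℝ)⁻¹ := by
      rw [Real.exp_neg, Real.exp_log hApos]
    have heq : Real.exp (-(Real.log (A.card : ℝ) + K)) = Real.exp (-K) / (A.card : ℝ) := by
      rw [neg_add, Real.exp_add, hlog]; ring
    rw [← heq]
    exact Real.exp_le_exp.2 (by linarith)
  -- Fourier structure
  have hqhat : ∀ γ : AddChar G Circle,
      fourierAt r γ = (fourierAt q γ) ^ m * fourierAt (unif A) γ := by
    intro γ
    rw [hr, hq, fourierAt_conv, fourierAt_iterConv, fourierAt_iterConv, ← pow_mul,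
      mul_comm l m]
  have habr : ∀ γ, ‖fourierAt r γ‖ ≤ 1 := abs_fourierAt_le_one hr0 hr1
  set Γ : Finset (AddChar G Circle) := Finset.univ.filter (· ∈ LSpec q ε) with hΓ
  have hε2 : (0:ℝ) ≤ 1 - ε ^ 2 / 2 := by nlinarith
  have hout : ∀ γ ∈ Γᶜ, ‖fourierAt r γ‖ ^ 2
      ≤ (1 - ε ^ 2 / 2) ^ m * ‖fourierAt (unif A) γ‖ ^ 2 := by
    intro γ hγ
    have hγ' : γ ∉ Γ := Finset.mem_compl.mp hγ
    rw [hΓ] at hγ'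
    simp only [Finset.mem_filter, Finset.mem_univ, true_and] at hγ'
    have hnot : ¬ (1 - ε ^ 2 / 2 ≤ ‖fourierAt q γ‖ ^ 2) := fun h => hγ' h
    have hlt : ‖fourierAt q γ‖ ^ 2 < 1 - ε ^ 2 / 2 := not_le.mp hnot
    rw [hqhat γ, norm_mul, norm_pow, mul_pow, ← pow_mul, mul_comm m 2, pow_mul]
    have hle : (‖fourierAt q γ‖ ^ 2) ^ m ≤ (1 - ε ^ 2 / 2) ^ m :=
      pow_le_pow_left₀ (by positivity) hlt.le m
    exact mul_le_mul_of_nonneg_right hle (by positivity)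
  have hsum_u : ∑ γ : AddChar G Circle, ‖fourierAt (unif A) γ‖ ^ 2
      = (Fintype.card G : ℝ) * (A.card : ℝ)⁻¹ := by
    rw [parseval, sum_sq_unif hA]
  have hout_sum : ∑ γ ∈ Γᶜ, ‖fourierAt r γ‖ ^ 2
      ≤ (1 - ε ^ 2 / 2) ^ m * ((Fintype.card G : ℝ) * (A.card : ℝ)⁻¹) := by
    calc ∑ γ ∈ Γᶜ, ‖fourierAt r γ‖ ^ 2
        ≤ ∑ γ ∈ Γᶜ, (1 - ε ^ 2 / 2) ^ m * ‖fourierAt (unif A) γ‖ ^ 2 :=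
          Finset.sum_le_sum hout
      _ ≤ ∑ γ : AddChar G Circle, (1 - ε ^ 2 / 2) ^ m * ‖fourierAt (unif A) γ‖ ^ 2 := by
          refine Finset.sum_le_sum_of_subset_of_nonneg (Finset.subset_univ _) ?_
          intro γ _ _
          exact mul_nonneg (pow_nonneg hε2 m) (by positivity)
      _ = (1 - ε ^ 2 / 2) ^ m * ((Fintype.card G : ℝ) * (A.card : ℝ)⁻¹) := by
          rw [← Finset.mul_sum, hsum_u]
  have htot : (Fintype.card G : ℝ) * (Real.exp (-K) / A.card)
      ≤ ∑ γ : AddChar G Circle, ‖fourierAt r γ‖ ^ 2 := by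
    rw [parseval]
    exact mul_le_mul_of_nonneg_left hexp hGpos.le
  have hsplit : ∑ γ ∈ Γ, ‖fourierAt r γ‖ ^ 2
      + ∑ γ ∈ Γᶜ, ‖fourierAt r γ‖ ^ 2
      = ∑ γ : AddChar G Circle, ‖fourierAt r γ‖ ^ 2 :=
    Finset.sum_add_sum_compl Γ _
  have hin : (Fintype.card G : ℝ) * (Real.exp (-K) / (2 * A.card))
      ≤ ∑ γ ∈ Γ, ‖fourierAt r γ‖ ^ 2 := by
    have hcomb : (1 - ε ^ 2 / 2) ^ m * ((Fintype.card G : ℝ) * (A.card : ℝ)⁻¹)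
        ≤ (1/2) * Real.exp (-K) * ((Fintype.card G : ℝ) * (A.card : ℝ)⁻¹) :=
      mul_le_mul_of_nonneg_right hK1 (by positivity)
    have hiden : (Fintype.card G : ℝ) * (Real.exp (-K) / A.card)
        - (1/2) * Real.exp (-K) * ((Fintype.card G : ℝ) * (A.card : ℝ)⁻¹)
        = (Fintype.card G : ℝ) * (Real.exp (-K) / (2 * A.card)) := by
      field_simp
      ring
    linarith
  have hΓcard : (Fintype.card G : ℝ) * (Real.exp (-K) / (2 * A.card)) ≤ (Γ.card : ℝ) := by
    refine hin.trans ?_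
    calc ∑ γ ∈ Γ, ‖fourierAt r γ‖ ^ 2
        ≤ ∑ _γ ∈ Γ, (1:ℝ) := by
          refine Finset.sum_le_sum fun γ _ => ?_
          have h := habr γ
          have h0 := norm_nonneg (fourierAt r γ)
          nlinarith
      _ = (Γ.card : ℝ) := by simp
  have h2a : (0:ℝ) < 2 * A.card := by linarith
  have hΓpos : (0:ℝ) < (Γ.card : ℝ) :=
    lt_of_lt_of_le (mul_pos hGpos (div_pos (Real.exp_pos _) h2a)) hΓcard
  set B : Finset G := Finset.univ.filter (· ∈ bohrSet G (LSpec q ε) (1/2)) with hBdef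
  have hcard : (Nat.card (bohrSet G (LSpec q ε) (1/2)) : ℝ) = (B.card : ℝ) := by
    have hsetmem : bohrSet G (LSpec q ε) (1/2) = (↑B : Set G) := by
      ext x
      rw [hBdef]
      simp
    rw [hsetmem, Nat.card_coe_set_eq, Set.ncard_coe_finset]
  have hBohr : (B.card : ℝ) * ((Γ.card : ℝ)/2) ^ 2 ≤ (Fintype.card G : ℝ) * Γ.card := by
    refine bohr_card_bound Γ B ?_
    intro x hx γ hγ
    rw [hBdef] at hx
    simp only [Finset.mem_filter, Finset.mem_univ, true_and] at hx
    rw [hΓ] at hγ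
    simp only [Finset.mem_filter, Finset.mem_univ, true_and] at hγ
    exact hx γ hγ
  have hs1 : (B.card : ℝ) * (Γ.card : ℝ) ≤ 4 * Fintype.card G := by
    have h4 : (B.card : ℝ) * (Γ.card : ℝ) * (Γ.card : ℝ)
        ≤ 4 * (Fintype.card G : ℝ) * (Γ.card : ℝ) := by nlinarith [hBohr]
    exact le_of_mul_le_mul_right h4 hΓpos
  have hs2 : (B.card : ℝ) * ((Fintype.card G : ℝ) * (Real.exp (-K) / (2 * A.card)))
      ≤ 4 * Fintype.card G :=
    le_trans (mul_le_mul_of_nonneg_left hΓcard (Nat.cast_nonneg _)) hs1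
  have h5 : (B.card : ℝ) * Real.exp (-K) ≤ 8 * A.card := by
    have e1 : (B.card : ℝ) * ((Fintype.card G : ℝ) * (Real.exp (-K) / (2 * A.card)))
        = ((B.card : ℝ) * Real.exp (-K) * Fintype.card G) / (2 * A.card) := by
      field_simp
    rw [e1, div_le_iff₀ h2a] at hs2
    have hs2' : ((B.card : ℝ) * Real.exp (-K)) * (Fintype.card G : ℝ)
        ≤ (8 * A.card) * (Fintype.card G : ℝ) := by linarith
    exact le_of_mul_le_mul_right hs2' hGpos
  have hexpK : Real.exp (-K) * Real.exp K = 1 := by rw [← Real.exp_add]; simp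
  rw [hcard]
  calc (B.card : ℝ) = (B.card : ℝ) * (Real.exp (-K) * Real.exp K) := by rw [hexpK, mul_one]
    _ = ((B.card : ℝ) * Real.exp (-K)) * Real.exp K := by ring
    _ ≤ (8 * A.card) * Real.exp K := mul_le_mul_of_nonneg_right h5 (Real.exp_nonneg K)

/-- upper bound on the size of a Bohr set of the large spectrum,
from entropic polynomial-growth-type hypotheses. -/
theorem bohr_upper_bound {G : Type*} [AddCommGroup G] [Fintype G] [DecidableEq G]
    (A : Finset G) (hA : A.Nonempty) (p : G → ℝ) (hp : IsPMF p)
    (hsupp : Function.support p ⊆ (A : Set G))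
    (d ε : ℝ) (m l : ℕ) (hd : 1 ≤ d) (hε0 : 0 < ε) (hε1 : ε < 1) (hm : 1 ≤ m) (hl : 1 ≤ l)
    (h1 : (1 - ε ^ 2 / 2) ^ m ≤
      (1 / 2) * Real.exp (-(d * Real.log (l * m)) - 30 * d * Real.log d))
    (h2 : ent (conv (iterConv p (m * l)) (unif A)) - ent (unif A) ≤
      d * Real.log (m * l) + 30 * d * Real.log d) :
    (Nat.card (bohrSet G (LSpec (iterConv p l) ε) (1 / 2)) : ℝ) ≤
      8 * A.card * Real.exp (d * Real.log (l * m) + 30 * d * Real.log d) :=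
  bohr_upper_bound_aux A hA p hp hsupp d ε m l hd hε0 hε1 hm hl h1 h2
end
end

section
/- Global weak Bogolyubov lemma: Let A be a subset of a finite abelian group G with density alpha = |A|/|G| > 0. Then there exist a Bohr set B of rank O(log(2/alpha)) and radius Omega(1/log(2/alpha)), and an integer k = O(log(2/alpha)), such that B is contained in kA - kA (the k-fold sumset minus the k-fold sumset). -/
open scoped BigOperators Pointwise
noncomputable section

/-- The `k`-fold iterated sumset `kA = A + A + ⋯ + A`. -/
def iterSumset {G : Type*} [AddCommGroup G] (A : Set G) : ℕ → Set G
  | 0 => {0}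
  | n + 1 => iterSumset A n + A


open Finset
set_option linter.unusedSectionVars false
set_option maxHeartbeats 4000000

lemma key_ineq {u : ℝ} (hu : |u| ≤ 1/4) : Real.exp (u - 1/12) ≤ 1 + u := by
  have h1 : -(1/4 : ℝ) ≤ u := neg_le_of_abs_le hu
  have h2 : u ≤ 1/4 := le_of_abs_le hu
  have ha : Real.exp (u - 1/12) * (13/12 - u) ≤ 1 := by
    have hb : (13/12 : ℝ) - u ≤ Real.exp (1/12 - u) := by
      have := Real.add_one_le_exp (1/12 - u)
      linarith
    calc Real.exp (u - 1/12) * (13/12 - u) ≤ Real.exp (u - 1/12) * Real.exp (1/12 - u) :=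
          mul_le_mul_of_nonneg_left hb (Real.exp_pos _).le
      _ = 1 := by rw [← Real.exp_add]; norm_num
  have hc : (1 : ℝ) ≤ (1 + u) * (13/12 - u) := by nlinarith [mul_nonneg (by linarith : (0:ℝ) ≤ 1/4 - u) (by linarith : (0:ℝ) ≤ u + 1/4)]
  have hd : (0:ℝ) < 13/12 - u := by linarith
  have := ha.trans hc
  exact le_of_mul_le_mul_right this hd

lemma jensen_exp {α : Type*} (s : Finset α) (hs : s.Nonempty) (g : α → ℝ) :
    (s.card : ℝ) * Real.exp ((∑ x ∈ s, g x) / s.card) ≤ ∑ x ∈ s, Real.exp (g x) := by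
  have hc : (0:ℝ) < (s.card : ℝ) := by exact_mod_cast Finset.card_pos.2 hs
  have h := (convexOn_exp).map_sum_le (t := s) (w := fun _ => (s.card : ℝ)⁻¹)
    (p := g) (fun _ _ => by positivity)
    (by rw [Finset.sum_const, nsmul_eq_mul]; field_simp) (fun _ _ => Set.mem_univ _)
  simp only [smul_eq_mul] at h
  rw [← Finset.mul_sum, ← Finset.mul_sum] at h
  calc (s.card : ℝ) * Real.exp ((∑ x ∈ s, g x) / s.card)
      = (s.card : ℝ) * Real.exp ((s.card : ℝ)⁻¹ * ∑ x ∈ s, g x) := by rw [div_eq_inv_mul]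
    _ ≤ (s.card : ℝ) * ((s.card : ℝ)⁻¹ * ∑ x ∈ s, Real.exp (g x)) :=
        mul_le_mul_of_nonneg_left h hc.le
    _ = ∑ x ∈ s, Real.exp (g x) := by field_simp

namespace WB

variable {G : Type} [AddCommGroup G] [Fintype G]

/-- normalized Fourier coefficient -/
def m (A : Finset G) (γ : AddChar G ℂ) : ℂ := (∑ a ∈ A, γ a) / (A.card : ℂ)

lemma m_zero (A : Finset G) (hA : A.Nonempty) : m A 0 = 1 := by
  have : (A.card : ℂ) ≠ 0 := by
    exact_mod_cast Nat.cast_ne_zero.2 (Finset.card_ne_zero_of_mem hA.choose_spec)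
  simp [m, div_eq_one_iff_eq this]

lemma norm_m_le_one (A : Finset G) (γ : AddChar G ℂ) : ‖m A γ‖ ≤ 1 := by
  rcases A.eq_empty_or_nonempty with rfl | hA
  · simp [m]
  have h0 : (0:ℝ) < (A.card : ℝ) := by
    have := Finset.card_pos.2 hA; positivity
  have h1 : ‖∑ a ∈ A, γ a‖ ≤ (A.card : ℝ) := by
    calc ‖∑ a ∈ A, γ a‖ ≤ ∑ a ∈ A, ‖γ a‖ := norm_sum_le _ _
    _ = (A.card : ℝ) := by simp [AddChar.norm_apply]
  rw [m, norm_div]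
  rw [div_le_one (by simpa using h0)]
  simpa using h1

lemma sum_char_eq (ψ : AddChar G ℂ) :
    ∑ x : G, ψ x = if ψ = 0 then (Fintype.card G : ℂ) else 0 := by
  have h := AddChar.expect_eq_ite ψ
  rw [Fintype.expect_eq_sum_div_card] at h
  have hc : ((Fintype.card G : ℂ)) ≠ 0 := by
    exact_mod_cast Nat.cast_ne_zero.2 Fintype.card_ne_zero
  rw [div_eq_iff hc] at h
  rw [h]
  split_ifs <;> simp

lemma char_map_sum {ι : Type*} (ψ : AddChar G ℂ) (s : Finset ι) (f : ι → G) :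
    ψ (∑ i ∈ s, f i) = ∏ i ∈ s, ψ (f i) := by
  induction s using Finset.cons_induction with
  | empty => simp
  | cons a s ha ih => rw [Finset.sum_cons, Finset.prod_cons, AddChar.map_add_eq_mul, ih]

/-- Key expansion lemma: expectation of a product over a dissociated set of characters. -/
lemma sum_prod_eq (Λ : Finset (AddChar G ℂ)) (hΛ : AddDissociated (↑Λ : Set (AddChar G ℂ)))
    (b : AddChar G ℂ → ℤ → ℂ) (hb : ∀ γ, b γ 0 = 1) :
    ∑ x : G, ∏ γ ∈ Λ, (∑ j ∈ ({-1, 0, 1} : Finset ℤ), b γ j * (j • γ) x)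
      = (Fintype.card G : ℂ) := by
  classical
  set t : AddChar G ℂ → Finset ℤ := fun γ => if γ ∈ Λ then ({-1,0,1} : Finset ℤ) else {0} with ht
  set bb : AddChar G ℂ → ℤ → ℂ := fun γ j => if γ ∈ Λ then b γ j else 1 with hbb
  have hext : ∀ x : G, ∏ γ ∈ Λ, (∑ j ∈ ({-1, 0, 1} : Finset ℤ), b γ j * (j • γ) x)
      = ∏ γ : AddChar G ℂ, ∑ j ∈ t γ, bb γ j * (j • γ) x := by
    intro x
    rw [← Finset.prod_subset (Finset.subset_univ Λ)]
    · exact Finset.prod_congr rfl fun γ hγ => by simp [ht, hbb, hγ]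
    · intro γ _ hγ
      simp [ht, hbb, hγ]
  simp_rw [hext, Finset.prod_univ_sum]
  rw [Finset.sum_comm]
  have hterm : ∀ p ∈ Fintype.piFinset t,
      ∑ x : G, ∏ γ : AddChar G ℂ, bb γ (p γ) * (p γ • γ) x
        = (if p = (fun _ => 0) then (Fintype.card G : ℂ) else 0) := by
    intro p hp
    have hmem : ∀ γ, p γ ∈ t γ := by
      intro γ; exact Fintype.mem_piFinset.1 hp γ
    have hexp : ∀ x : G, ∏ γ : AddChar G ℂ, bb γ (p γ) * (p γ • γ) x
        = (∏ γ : AddChar G ℂ, bb γ (p γ)) * (∑ γ : AddChar G ℂ, p γ • γ) x := by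
      intro x
      rw [Finset.prod_mul_distrib, AddChar.sum_apply]
    simp_rw [hexp, ← Finset.mul_sum, sum_char_eq]
    by_cases hz : (∑ γ : AddChar G ℂ, p γ • γ) = 0
    · -- dissociation: p is identically 0
      have hp0 : p = (fun _ => 0) := by
        set T : Finset (AddChar G ℂ) := Finset.univ.filter (fun γ => p γ = 1) with hT
        set U : Finset (AddChar G ℂ) := Finset.univ.filter (fun γ => p γ = -1) with hU
        have hval : ∀ γ, p γ = -1 ∨ p γ = 0 ∨ p γ = 1 := by
          intro γ
          have := hmem γ
          by_cases hγ : γ ∈ Λ <;> simp [ht, hγ] at this <;> tauto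
        have hTU : ∑ γ ∈ T ∪ U, p γ • γ = ∑ γ : AddChar G ℂ, p γ • γ := by
          apply Finset.sum_subset (Finset.subset_univ _)
          intro γ _ hγ
          simp only [hT, hU, Finset.mem_union, Finset.mem_filter, Finset.mem_univ,
            true_and] at hγ
          push_neg at hγ
          have : p γ = 0 := by rcases hval γ with h | h | h <;> tauto
          simp [this]
        have hdisj : Disjoint T U := by
          rw [Finset.disjoint_left]
          intro γ h1 h2
          simp only [hT, hU, Finset.mem_filter] at h1 h2
          omega
        have hsplit : ∑ γ ∈ T, γ - ∑ γ ∈ U, γ = 0 := by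
          have h1 : ∑ γ ∈ T, p γ • γ = ∑ γ ∈ T, γ := by
            apply Finset.sum_congr rfl
            intro γ hγ
            simp only [hT, Finset.mem_filter] at hγ
            rw [hγ.2, one_smul]
          have h2 : ∑ γ ∈ U, p γ • γ = -∑ γ ∈ U, γ := by
            rw [← Finset.sum_neg_distrib]
            apply Finset.sum_congr rfl
            intro γ hγ
            simp only [hU, Finset.mem_filter] at hγ
            rw [hγ.2, neg_smul, one_smul]
          have := hTU.trans hz
          rw [Finset.sum_union hdisj, h1, h2] at this
          linear_combination (norm := abel_nf) this
        have hTsub : ↑T ⊆ (↑Λ : Set (AddChar G ℂ)) := by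
          intro γ hγ
          simp only [hT, Finset.coe_filter, Set.mem_setOf_eq] at hγ
          by_contra hγΛ
          have := hmem γ
          simp [ht, hγΛ] at this
          simp_all
        have hUsub : ↑U ⊆ (↑Λ : Set (AddChar G ℂ)) := by
          intro γ hγ
          simp only [hU, Finset.coe_filter, Set.mem_setOf_eq] at hγ
          by_contra hγΛ
          have := hmem γ
          simp [ht, hγΛ] at this
          simp_all
        have hTeqU : T = U := hΛ hTsub hUsub (by linear_combination (norm := abel_nf) hsplit)
        have hTempty : T = ∅ := by
          have h2 : Disjoint U U := by rw [hTeqU] at hdisj; exact hdisj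
          exact hTeqU.trans ((Finset.disjoint_self_iff_empty _).1 h2)
        funext γ
        rcases hval γ with h | h | h
        · exfalso
          have : γ ∈ U := by simp [hU, h]
          rw [← hTeqU, hTempty] at this; simp at this
        · exact h
        · exfalso
          have : γ ∈ T := by simp [hT, h]
          rw [hTempty] at this; simp at this
      rw [if_pos hz, if_pos hp0, hp0]
      have : ∀ γ : AddChar G ℂ, bb γ (0:ℤ) = 1 := by
        intro γ; by_cases hγ : γ ∈ Λ <;> simp [hbb, hγ, hb]
      simp [this]
    · have hpne : p ≠ (fun _ => 0) := by
        intro hp0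
        apply hz
        rw [hp0]
        simp
      rw [if_neg hz, if_neg hpne, mul_zero]
  rw [Finset.sum_congr rfl hterm]
  rw [Finset.sum_ite_eq' (Fintype.piFinset t) (fun _ => (0:ℤ)) (fun _ => (Fintype.card G : ℂ))]
  rw [if_pos]
  rw [Fintype.mem_piFinset]
  intro γ
  by_cases hγ : γ ∈ Λ <;> simp [ht, hγ]


/-- Parseval -/
lemma parseval (A : Finset G) (hA : A.Nonempty) :
    ∑ γ : AddChar G ℂ, ‖m A γ‖ ^ 2 = (Fintype.card G : ℝ) / (A.card : ℝ) := by
  classical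
  have hcard : (A.card : ℂ) ≠ 0 := by
    exact_mod_cast Nat.cast_ne_zero.2 (Finset.card_ne_zero_of_mem hA.choose_spec)
  have key : ∑ γ : AddChar G ℂ, ((‖m A γ‖ ^ 2 : ℝ) : ℂ)
      = (Fintype.card G : ℂ) / (A.card : ℂ) := by
    have h1 : ∀ γ : AddChar G ℂ, ((‖m A γ‖ ^ 2 : ℝ) : ℂ)
        = (∑ a ∈ A, ∑ b ∈ A, γ (a - b)) / ((A.card : ℂ) * (A.card : ℂ)) := by
      intro γ
      have : ((‖m A γ‖ ^ 2 : ℝ) : ℂ) = m A γ * (starRingEnd ℂ) (m A γ) := by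
        rw [Complex.mul_conj']
        push_cast
        ring
      rw [this, m, map_div₀, map_sum]
      have hconj : ∀ b ∈ A, (starRingEnd ℂ) (γ b) = γ (-b) := by
        intro b _
        rw [AddChar.map_neg_eq_conj]
      rw [Finset.sum_congr rfl hconj]
      have hcc : (starRingEnd ℂ) ((A.card : ℂ)) = (A.card : ℂ) := by
        simp
      rw [hcc, div_mul_div_comm, Finset.sum_mul_sum]
      congr 1
      apply Finset.sum_congr rfl; intro a _
      apply Finset.sum_congr rfl; intro b _
      rw [← AddChar.map_add_eq_mul, sub_eq_add_neg]
    rw [Finset.sum_congr rfl (fun γ _ => h1 γ), ← Finset.sum_div]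
    rw [Finset.sum_comm]
    have h2 : ∀ a ∈ A, ∑ γ : AddChar G ℂ, ∑ b ∈ A, γ (a - b)
        = (Fintype.card G : ℂ) := by
      intro a ha
      rw [Finset.sum_comm]
      have h3 : ∀ b ∈ A, ∑ γ : AddChar G ℂ, γ (a - b)
          = if a - b = 0 then (Fintype.card G : ℂ) else 0 := fun b _ =>
        AddChar.sum_apply_eq_ite (a - b)
      rw [Finset.sum_congr rfl h3]
      simp_rw [sub_eq_zero]
      rw [Finset.sum_ite_eq, if_pos ha]
    rw [Finset.sum_congr rfl h2, Finset.sum_const, nsmul_eq_mul]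
    field_simp
  apply Complex.ofReal_injective
  push_cast at key ⊢
  exact key

lemma sum_mem_iter (A : Finset G) : ∀ (k : ℕ) (f : Fin k → G), (∀ i, f i ∈ A) →
    (∑ i, f i) ∈ iterSumset (↑A : Set G) k := by
  intro k
  induction k with
  | zero => intro f _; simp [iterSumset]
  | succ n ih =>
    intro f hf
    rw [Fin.sum_univ_succ]
    have h1 : (∑ i : Fin n, f i.succ) ∈ iterSumset (↑A : Set G) n :=
      ih (fun i => f i.succ) (fun i => hf _)
    have : f 0 + ∑ i : Fin n, f i.succ = (∑ i : Fin n, f i.succ) + f 0 := add_comm _ _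
    rw [this]
    exact Set.add_mem_add h1 (hf 0)

lemma support_subset (A : Finset G) (hA : A.Nonempty) (k : ℕ) (x : G)
    (hx : ∑ γ : AddChar G ℂ, ((‖m A γ‖ : ℂ)) ^ (2 * k) * γ x ≠ 0) :
    x ∈ iterSumset (↑A : Set G) k - iterSumset (↑A : Set G) k := by
  classical
  have hcard : (A.card : ℂ) ≠ 0 := by
    exact_mod_cast Nat.cast_ne_zero.2 (Finset.card_ne_zero_of_mem hA.choose_spec)
  -- rewrite each term
  have h1 : ∀ γ : AddChar G ℂ, ((‖m A γ‖ : ℂ)) ^ (2 * k) * γ x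
      = (∑ f ∈ Fintype.piFinset (fun _ : Fin k => A),
          ∑ g ∈ Fintype.piFinset (fun _ : Fin k => A),
          γ ((∑ i, f i) - (∑ i, g i) + x)) / ((A.card : ℂ)) ^ (2 * k) := by
    intro γ
    have hsq : ((‖m A γ‖ : ℂ)) ^ (2 * k) = (m A γ) ^ k * ((starRingEnd ℂ) (m A γ)) ^ k := by
      rw [pow_mul, ← mul_pow]
      congr 1
      rw [Complex.mul_conj']
    have hm1 : (m A γ) ^ k = (∑ f ∈ Fintype.piFinset (fun _ : Fin k => A),
        γ (∑ i, f i)) / ((A.card : ℂ)) ^ k := by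
      rw [m, div_pow, Finset.sum_pow']
      congr 1
      apply Finset.sum_congr rfl
      intro f _
      rw [char_map_sum]
    have hm2 : ((starRingEnd ℂ) (m A γ)) ^ k = (∑ g ∈ Fintype.piFinset (fun _ : Fin k => A),
        γ (-(∑ i, g i))) / ((A.card : ℂ)) ^ k := by
      rw [m, map_div₀, map_sum, div_pow]
      have : (starRingEnd ℂ) ((A.card : ℂ)) = (A.card : ℂ) := by simp
      rw [this]
      congr 1
      have hconj : ∀ b ∈ A, (starRingEnd ℂ) (γ b) = γ (-b) := fun b _ =>
        (AddChar.map_neg_eq_conj γ b).symm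
      rw [Finset.sum_congr rfl hconj, Finset.sum_pow']
      apply Finset.sum_congr rfl
      intro g _
      rw [← char_map_sum]
      congr 1
      rw [← Finset.sum_neg_distrib]
    rw [hsq, hm1, hm2, div_mul_div_comm, ← pow_add, div_mul_eq_mul_div, two_mul]
    congr 1
    rw [Finset.sum_mul_sum, Finset.sum_mul]
    apply Finset.sum_congr rfl; intro f _
    rw [Finset.sum_mul]
    apply Finset.sum_congr rfl; intro g _
    rw [← AddChar.map_add_eq_mul, ← AddChar.map_add_eq_mul]
    congr 1
    abel
  rw [Finset.sum_congr rfl (fun γ _ => h1 γ), ← Finset.sum_div] at hx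
  have hx2 : ∑ γ : AddChar G ℂ, ∑ f ∈ Fintype.piFinset (fun _ : Fin k => A),
      ∑ g ∈ Fintype.piFinset (fun _ : Fin k => A), γ ((∑ i, f i) - (∑ i, g i) + x) ≠ 0 := by
    intro h
    apply hx
    rw [h, zero_div]
  rw [Finset.sum_comm] at hx2
  obtain ⟨f, _, hf2⟩ := Finset.exists_ne_zero_of_sum_ne_zero hx2
  rw [Finset.sum_comm] at hf2
  obtain ⟨g, _, hg2⟩ := Finset.exists_ne_zero_of_sum_ne_zero hf2
  rw [AddChar.sum_apply_eq_ite] at hg2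
  have hcond : (∑ i, f i) - (∑ i, g i) + x = 0 := by
    by_contra hc
    rw [if_neg hc] at hg2
    exact hg2 rfl
  have hfa : ∀ i, f i ∈ A := Fintype.mem_piFinset.1 (by assumption)
  have hga : ∀ i, g i ∈ A := Fintype.mem_piFinset.1 (by assumption)
  rw [Set.mem_sub]
  refine ⟨∑ i, g i, sum_mem_iter A k g hga, ∑ i, f i, sum_mem_iter A k f hfa, ?_⟩
  have h6 := add_eq_zero_iff_neg_eq.1 hcond
  rw [neg_sub] at h6
  exact h6

lemma sum_three (f : ℤ → ℂ) :
    ∑ j ∈ ({-1, 0, 1} : Finset ℤ), f j = f (-1) + f 0 + f 1 := by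
  rw [Finset.sum_insert (by decide), Finset.sum_insert (by decide), Finset.sum_singleton]
  ring

/-- Chang's lemma via the exponential moment method. -/
lemma chang (A : Finset G) (hA : A.Nonempty) (Λ : Finset (AddChar G ℂ))
    (hdis : AddDissociated (↑Λ : Set (AddChar G ℂ)))
    (hspec : ∀ γ ∈ Λ, (9:ℝ)/10 ≤ ‖m A γ‖) :
    (Λ.card : ℝ) ≤ 8 * Real.log ((Fintype.card G : ℝ) / (A.card : ℝ)) := by
  classical
  have hcardA : (0:ℝ) < (A.card : ℝ) := by exact_mod_cast Finset.card_pos.2 hA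
  have hcardAC : (A.card : ℂ) ≠ 0 := by exact_mod_cast (by positivity : (A.card:ℝ) ≠ 0)
  set d : ℕ := Λ.card with hd
  set c : AddChar G ℂ → ℂ := fun γ => (starRingEnd ℂ) (m A γ) / ((‖m A γ‖ : ℝ) : ℂ) with hc
  have hmne : ∀ γ ∈ Λ, ‖m A γ‖ ≠ 0 := by
    intro γ hγ; have := hspec γ hγ; intro h; rw [h] at this; norm_num at this
  have hnormc : ∀ γ ∈ Λ, ‖c γ‖ = 1 := by
    intro γ hγ
    rw [hc]
    simp only [norm_div, RCLike.norm_conj, Complex.norm_real, Real.norm_eq_abs,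
      abs_of_nonneg (norm_nonneg _)]
    rw [div_self (hmne γ hγ)]
  have hrebd : ∀ γ ∈ Λ, ∀ x : G, |(c γ * γ x).re| ≤ 1 := by
    intro γ hγ x
    calc |(c γ * γ x).re| ≤ ‖c γ * γ x‖ := Complex.abs_re_le_norm _
      _ = 1 := by rw [norm_mul, hnormc γ hγ, AddChar.norm_apply, mul_one]
  set F : G → ℝ := fun x => ∏ γ ∈ Λ, (1 + (c γ * γ x).re / 4) with hF
  set b : AddChar G ℂ → ℤ → ℂ := fun γ j =>
    if j = 1 then c γ / 8 else if j = -1 then (starRingEnd ℂ) (c γ) / 8 else 1 with hbdef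
  have h1 : ∑ x : G, ((F x : ℝ) : ℂ) = (Fintype.card G : ℂ) := by
    have hfac : ∀ x : G, ((F x : ℝ) : ℂ)
        = ∏ γ ∈ Λ, (∑ j ∈ ({-1, 0, 1} : Finset ℤ), b γ j * (j • γ) x) := by
      intro x
      rw [hF, Complex.ofReal_prod]
      apply Finset.prod_congr rfl
      intro γ hγ
      rw [sum_three]
      have e1 : ((-1 : ℤ) • γ) x = (starRingEnd ℂ) (γ x) := by
        rw [AddChar.zsmul_apply, zpow_neg_one, AddChar.inv_apply_eq_conj]
      have e0 : ((0 : ℤ) • γ) x = 1 := by rw [AddChar.zsmul_apply, zpow_zero]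
      have e2 : ((1 : ℤ) • γ) x = γ x := by rw [AddChar.zsmul_apply, zpow_one]
      rw [e1, e0, e2]
      have hb1 : b γ (-1) = (starRingEnd ℂ) (c γ) / 8 := by norm_num [hbdef]
      have hb2 : b γ 0 = 1 := by norm_num [hbdef]
      have hb3 : b γ 1 = c γ / 8 := by norm_num [hbdef]
      rw [hb1, hb2, hb3]
      have hcz : (starRingEnd ℂ) (c γ) / 8 * (starRingEnd ℂ) (γ x)
          = (starRingEnd ℂ) (c γ * γ x) / 8 := by rw [map_mul]; ring
      have hcz2 : c γ / 8 * γ x = (c γ * γ x) / 8 := by ring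
      rw [hcz, hcz2]
      generalize (c γ * γ x) = z
      have hzz := Complex.add_conj z
      push_cast at hzz ⊢
      linear_combination (-1/8 : ℂ) * hzz
    rw [Finset.sum_congr rfl (fun x _ => hfac x)]
    exact sum_prod_eq Λ hdis b (fun γ => by norm_num [hbdef])
  have h1R : ∑ x : G, F x = (Fintype.card G : ℝ) := by
    apply Complex.ofReal_injective
    push_cast at h1 ⊢
    exact h1
  set g : G → ℝ := fun x => (∑ γ ∈ Λ, (c γ * γ x).re / 4) - (d : ℝ)/12 with hg
  have h3 : ∀ x : G, Real.exp (g x) ≤ F x := by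
    intro x
    have hsplit : g x = ∑ γ ∈ Λ, ((c γ * γ x).re / 4 - 1/12) := by
      rw [hg, Finset.sum_sub_distrib, Finset.sum_const, hd, nsmul_eq_mul]
      ring
    rw [hsplit, Real.exp_sum, hF]
    apply Finset.prod_le_prod (fun γ _ => (Real.exp_pos _).le)
    intro γ hγ
    apply key_ineq
    rw [abs_div, abs_of_nonneg (by norm_num : (0:ℝ) ≤ 4)]
    have := hrebd γ hγ x
    linarith
  have hF0 : ∀ x, 0 ≤ F x := fun x => le_trans (Real.exp_pos _).le (h3 x)
  have h5 : ∑ x ∈ A, F x ≤ (Fintype.card G : ℝ) := by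
    rw [← h1R]
    exact Finset.sum_le_sum_of_subset_of_nonneg (Finset.subset_univ A)
      (fun x _ _ => hF0 x)
  have h6 : ∑ x ∈ A, Real.exp (g x) ≤ (Fintype.card G : ℝ) :=
    le_trans (Finset.sum_le_sum (fun x _ => h3 x)) h5
  have h7 := jensen_exp A hA g
  have h9 : ∀ γ ∈ Λ, ∑ x ∈ A, (c γ * γ x).re = (A.card : ℝ) * ‖m A γ‖ := by
    intro γ hγ
    have hsum : ∑ x ∈ A, (c γ * γ x) = ((A.card : ℝ) * ‖m A γ‖ : ℝ) := by
      rw [← Finset.mul_sum]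
      have hSm : (∑ x ∈ A, γ x) = (A.card : ℂ) * m A γ := by
        rw [m, mul_div_cancel₀ _ hcardAC]
      have hmm : (starRingEnd ℂ) (m A γ) * m A γ = ((‖m A γ‖ : ℝ) : ℂ) ^ 2 := by
        rw [mul_comm, Complex.mul_conj']
      have hne : ((‖m A γ‖ : ℝ) : ℂ) ≠ 0 := Complex.ofReal_ne_zero.2 (hmne γ hγ)
      rw [hSm]
      calc c γ * ((A.card : ℂ) * m A γ)
          = (A.card : ℂ) * ((starRingEnd ℂ) (m A γ) * m A γ) / ((‖m A γ‖ : ℝ) : ℂ) := by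
            rw [hc]; ring
        _ = (A.card : ℂ) * (((‖m A γ‖ : ℝ) : ℂ) * ((‖m A γ‖ : ℝ) : ℂ)) / ((‖m A γ‖ : ℝ) : ℂ) := by
            rw [hmm, sq]
        _ = (A.card : ℂ) * ((‖m A γ‖ : ℝ) : ℂ) := by
            rw [mul_div_assoc, mul_div_assoc, div_self hne, mul_one]
        _ = ((A.card : ℝ) * ‖m A γ‖ : ℝ) := by push_cast; ring
    calc ∑ x ∈ A, (c γ * γ x).re = (∑ x ∈ A, (c γ * γ x)).re := by
          rw [Complex.re_sum]
      _ = (A.card : ℝ) * ‖m A γ‖ := by rw [hsum, Complex.ofReal_re]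
  have h10 : (A.card : ℝ) * ((9/40) * d - d/12) ≤ ∑ x ∈ A, g x := by
    have h8 : ∑ x ∈ A, g x
        = (∑ γ ∈ Λ, (∑ x ∈ A, (c γ * γ x).re) / 4) - (A.card : ℝ) * (d/12) := by
      rw [hg]
      rw [Finset.sum_sub_distrib, Finset.sum_const, nsmul_eq_mul, Finset.sum_comm]
      simp_rw [Finset.sum_div]
    rw [h8]
    have : ∑ γ ∈ Λ, (∑ x ∈ A, (c γ * γ x).re) / 4 ≥ ∑ γ ∈ Λ, (A.card : ℝ) * (9/10) / 4 := by
      apply Finset.sum_le_sum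
      intro γ hγ
      rw [h9 γ hγ]
      have := hspec γ hγ
      have := hcardA
      apply div_le_div_of_nonneg_right _ (by norm_num)
      · nlinarith
    rw [Finset.sum_const, nsmul_eq_mul, ← hd] at this
    have hd0 : (0:ℝ) ≤ (d:ℝ) := Nat.cast_nonneg _
    nlinarith
  have h11 : (A.card : ℝ) * Real.exp ((d : ℝ)/8) ≤ (Fintype.card G : ℝ) := by
    have havg : (d : ℝ)/8 ≤ (∑ x ∈ A, g x) / (A.card : ℝ) := by
      rw [le_div_iff₀ hcardA]
      have : (d:ℝ)/8 * (A.card : ℝ) ≤ (A.card : ℝ) * ((9/40) * d - d/12) := by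
        have hd0 : (0:ℝ) ≤ (d:ℝ) := Nat.cast_nonneg _
        nlinarith
      linarith [h10]
    calc (A.card : ℝ) * Real.exp ((d : ℝ)/8)
        ≤ (A.card : ℝ) * Real.exp ((∑ x ∈ A, g x) / (A.card : ℝ)) :=
          mul_le_mul_of_nonneg_left (Real.exp_le_exp.2 havg) hcardA.le
      _ ≤ ∑ x ∈ A, Real.exp (g x) := h7
      _ ≤ (Fintype.card G : ℝ) := h6
  have h12 : Real.exp ((d : ℝ)/8) ≤ (Fintype.card G : ℝ) / (A.card : ℝ) := by
    rw [le_div_iff₀ hcardA]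
    calc Real.exp ((d : ℝ)/8) * (A.card : ℝ) = (A.card : ℝ) * Real.exp ((d : ℝ)/8) := by ring
      _ ≤ (Fintype.card G : ℝ) := h11
  have h13 : (d : ℝ)/8 ≤ Real.log ((Fintype.card G : ℝ) / (A.card : ℝ)) := by
    have hpos : (0:ℝ) < (Fintype.card G : ℝ) / (A.card : ℝ) := by
      have : (0:ℝ) < (Fintype.card G : ℝ) := by exact_mod_cast Fintype.card_pos
      positivity
    exact (Real.le_log_iff_exp_le hpos).2 h12
  linarith

lemma prod_dist {ι : Type*} (s : Finset ι) (h : ι → ℂ) (hn : ∀ i ∈ s, ‖h i‖ = 1) :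
    ‖(∏ i ∈ s, h i) - 1‖ ≤ ∑ i ∈ s, ‖h i - 1‖ := by
  induction s using Finset.cons_induction with
  | empty => simp
  | cons a s ha ih =>
    rw [Finset.prod_cons, Finset.sum_cons]
    have e : h a * ∏ i ∈ s, h i - 1 = h a * ((∏ i ∈ s, h i) - 1) + (h a - 1) := by ring
    rw [e]
    refine (norm_add_le _ _).trans ?_
    rw [norm_mul, hn a (Finset.mem_cons_self _ _), one_mul]
    have h2 := ih (fun i hi => hn i (Finset.mem_cons_of_mem hi))
    linarith

lemma span_bound [DecidableEq (AddChar G ℂ)] (Λ : Finset (AddChar G ℂ)) (γ : AddChar G ℂ)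
    (hγ : γ ∈ Finset.addSpan Λ) (x : G) (ρ : ℝ) (hρ : 0 ≤ ρ)
    (hx : ∀ l ∈ Λ, ‖(l x : ℂ) - 1‖ ≤ ρ) :
    ‖γ x - 1‖ ≤ (Λ.card : ℝ) * ρ := by
  obtain ⟨ε, hε, hsum⟩ := Finset.mem_addSpan.1 hγ
  rw [← hsum, AddChar.sum_apply]
  refine (prod_dist Λ _ (fun l hl => ?_)).trans ?_
  · rw [AddChar.zsmul_apply, norm_zpow, AddChar.norm_apply, one_zpow]
  · refine (Finset.sum_le_sum (fun l hl => ?_)).trans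
      (le_of_eq (by rw [Finset.sum_const, nsmul_eq_mul]))
    show ‖(ε l • l) x - 1‖ ≤ ρ
    rw [AddChar.zsmul_apply]
    rcases hε l with h | h | h <;> rw [h]
    · rw [zpow_neg_one, AddChar.inv_apply_eq_conj]
      have e2 : (starRingEnd ℂ) (l x) - 1 = (starRingEnd ℂ) (l x - 1) := by
        rw [map_sub, map_one]
      rw [e2, RCLike.norm_conj]
      exact hx l hl
    · rw [zpow_zero]; simpa using hρ
    · rw [zpow_one]; exact hx l hl

end WB


/-- global weak Bogolyubov lemma: there is an absolute constant `C > 0` such that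
for every finite abelian group `G` and nonempty `A ⊆ G` of density `α`, there are a Bohr set of
rank `≤ C log(2/α)` and radius `≥ 1/(C log(2/α))` and `k ≤ C log(2/α)` with `B ⊆ kA - kA`. -/
theorem weak_bogolyubov_global :
    ∃ C : ℝ, 0 < C ∧
      ∀ (G : Type) [AddCommGroup G] [Fintype G] (A : Finset G), A.Nonempty →
        ∃ (S : Finset (AddChar G Circle)) (ρ : ℝ) (k : ℕ),
          0 < ρ ∧ 1 ≤ k ∧
          (S.card : ℝ) ≤ C * Real.log (2 * Fintype.card G / A.card) ∧
          1 / (C * Real.log (2 * Fintype.card G / A.card)) ≤ ρ ∧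
          (k : ℝ) ≤ C * Real.log (2 * Fintype.card G / A.card) ∧
          bohrSet G ↑S ρ ⊆ iterSumset (↑A) k - iterSumset (↑A) k := by
  classical
  refine ⟨300, by norm_num, ?_⟩
  intro G _ _ A hA
  classical
  set N : ℝ := (Fintype.card G : ℝ) with hN
  set a : ℝ := (A.card : ℝ) with ha
  set L : ℝ := Real.log (2 * N / a) with hL
  have ha0 : 0 < a := by rw [ha]; exact_mod_cast Finset.card_pos.2 hA
  have hN0 : 0 < N := by rw [hN]; exact_mod_cast Fintype.card_pos
  have haN : a ≤ N := by
    rw [ha, hN]; exact_mod_cast Finset.card_le_card (Finset.subset_univ A) |>.trans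
      (le_of_eq (Finset.card_univ))
  have h2Na : (2 : ℝ) ≤ 2 * N / a := by
    rw [le_div_iff₀ ha0]; linarith
  have hlog2 : (0.6931471803 : ℝ) < Real.log 2 := Real.log_two_gt_d9
  have hLlog2 : Real.log 2 ≤ L := by
    rw [hL]; exact Real.log_le_log (by norm_num) h2Na
  have hL0 : 0 < L := by linarith
  -- the large spectrum
  set P : AddChar G ℂ → Prop := fun γ => (9:ℝ)/10 ≤ ‖WB.m A γ‖ with hP
  set SpecF : Finset (AddChar G ℂ) :=
    Finset.univ.filter (fun γ => γ ≠ 0 ∧ P γ) with hSpecF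
  set D : ℕ := ⌈(8:ℝ) * L⌉₊ with hD
  have hss : ∀ s' ⊆ SpecF, AddDissociated (↑s' : Set (AddChar G ℂ)) → s'.card ≤ D := by
    intro s' hsub hdiss
    have hb := WB.chang A hA s' hdiss (fun γ hγ => (Finset.mem_filter.1 (hsub hγ)).2.2)
    have hmono : Real.log (N / a) ≤ L := by
      rw [hL]
      apply Real.log_le_log (div_pos hN0 ha0)
      calc N / a ≤ 2 * (N / a) := by
            have h0 : 0 ≤ N / a := (div_pos hN0 ha0).le
            linarith
        _ = 2 * N / a := by ring
    have hcast : (s'.card : ℝ) ≤ (D : ℕ) := by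
      calc (s'.card : ℝ) ≤ 8 * Real.log (N / a) := hb
        _ ≤ 8 * L := by linarith
        _ ≤ ((D : ℕ) : ℝ) := by rw [hD]; exact Nat.le_ceil _
    exact_mod_cast hcast
  obtain ⟨Λ, hΛsub, hΛcard, hΛspan⟩ :=
    Finset.exists_subset_addSpan_card_le_of_forall_addDissociated hss
  set S : Finset (AddChar G Circle) :=
    Λ.image (fun γ => (AddChar.circleEquivComplex (α := G)).symm γ) with hS
  set ρ : ℝ := 1 / (2 * (D : ℝ) + 2) with hρ
  set k : ℕ := 9 * ⌈L⌉₊ + 1 with hk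
  have hρ0 : 0 < ρ := by rw [hρ]; positivity
  have hDle : (D : ℝ) ≤ 8 * L + 1 := by
    rw [hD]; exact (Nat.ceil_lt_add_one (by positivity)).le
  have hD10 : (D : ℝ) ≤ 10 * L := by nlinarith
  have hceilL : (⌈L⌉₊ : ℝ) ≤ L + 1 := (Nat.ceil_lt_add_one hL0.le).le
  refine ⟨S, ρ, k, hρ0, by omega, ?_, ?_, ?_, ?_⟩
  · -- rank bound
    have h1 : (S.card : ℝ) ≤ (Λ.card : ℝ) := by
      exact_mod_cast Finset.card_image_le
    have h2 : (Λ.card : ℝ) ≤ (D : ℝ) := by exact_mod_cast hΛcard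
    calc (S.card : ℝ) ≤ (D : ℝ) := h1.trans h2
      _ ≤ 10 * L := hD10
      _ ≤ 300 * L := by nlinarith
  · -- radius bound
    have h1 : 2 * (D : ℝ) + 2 ≤ 300 * L := by nlinarith
    rw [hρ]
    apply one_div_le_one_div_of_le (by positivity) h1
  · -- k bound
    have : (k : ℝ) = 9 * (⌈L⌉₊ : ℝ) + 1 := by rw [hk]; push_cast; ring
    rw [this]
    nlinarith
  · -- Bohr set inclusion
    intro x hx
    have hboh : ∀ l ∈ Λ, ‖(l x : ℂ) - 1‖ ≤ ρ := by
      intro l hl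
      have hmem : (AddChar.circleEquivComplex (α := G)).symm l ∈ S :=
        Finset.mem_image_of_mem _ hl
      have h3 := hx _ (Finset.mem_coe.2 hmem)
      have hcoe : ((((AddChar.circleEquivComplex (α := G)).symm l) x : Circle) : ℂ) = l x := rfl
      rw [hcoe] at h3
      exact h3
    apply WB.support_subset A hA k x
    -- show the Fourier sum is nonzero by showing its real part is large
    intro hzero
    have hre : (∑ γ : AddChar G ℂ, ((‖WB.m A γ‖ : ℂ)) ^ (2 * k) * γ x).re
        = ∑ γ : AddChar G ℂ, ‖WB.m A γ‖ ^ (2 * k) * (γ x).re := by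
      rw [Complex.re_sum]
      apply Finset.sum_congr rfl
      intro γ _
      rw [← Complex.ofReal_pow, Complex.re_ofReal_mul]
    set f : AddChar G ℂ → ℝ := fun γ => ‖WB.m A γ‖ ^ (2 * k) * (γ x).re with hf
    have hposSum : (1:ℝ)/2 ≤ ∑ γ : AddChar G ℂ, f γ := by
      have hsplit : ∑ γ : AddChar G ℂ, f γ
          = f 0 + ∑ γ ∈ Finset.univ.erase 0, f γ :=
        (Finset.add_sum_erase _ f (Finset.mem_univ 0)).symm
      have hf0 : f 0 = 1 := by
        rw [hf]
        simp only [WB.m_zero A hA, AddChar.zero_apply, Complex.one_re, norm_one, one_pow, mul_one]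
      have hsplit2 : ∑ γ ∈ Finset.univ.erase 0, f γ
          = ∑ γ ∈ (Finset.univ.erase 0).filter P, f γ
            + ∑ γ ∈ (Finset.univ.erase 0).filter (fun γ => ¬ P γ), f γ :=
        (Finset.sum_filter_add_sum_filter_not _ _ _).symm
      have hpos : 0 ≤ ∑ γ ∈ (Finset.univ.erase 0).filter P, f γ := by
        apply Finset.sum_nonneg
        intro γ hγ
        have hγ2 := Finset.mem_filter.1 hγ
        have hγ3 : γ ∈ SpecF := by
          rw [hSpecF, Finset.mem_filter]
          exact ⟨Finset.mem_univ _, (Finset.mem_erase.1 hγ2.1).1, hγ2.2⟩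
        have hγ4 : γ ∈ Finset.addSpan Λ := hΛspan hγ3
        have hb1 : ‖γ x - 1‖ ≤ (Λ.card : ℝ) * ρ :=
          WB.span_bound Λ γ hγ4 x ρ hρ0.le hboh
        have hb2 : (Λ.card : ℝ) * ρ ≤ 1/2 := by
          have hcard : (Λ.card : ℝ) ≤ (D : ℝ) := by exact_mod_cast hΛcard
          have : (Λ.card : ℝ) * ρ ≤ (D : ℝ) * ρ :=
            mul_le_mul_of_nonneg_right hcard hρ0.le
          refine this.trans ?_
          rw [hρ, mul_one_div, div_le_iff₀ (by positivity)]
          nlinarith [Nat.cast_nonneg (α := ℝ) D]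
        have hre2 : 1 - (γ x).re ≤ ‖γ x - 1‖ := by
          have e1 : 1 - (γ x).re = ((1 : ℂ) - γ x).re := by
            rw [Complex.sub_re, Complex.one_re]
          rw [e1, ← norm_sub_rev]
          exact (le_abs_self _).trans (Complex.abs_re_le_norm _)
        have : 0 ≤ (γ x).re := by linarith
        positivity
      have hneg : -(((9:ℝ)/10) ^ (2 * k - 2) * (N / a))
          ≤ ∑ γ ∈ (Finset.univ.erase 0).filter (fun γ => ¬ P γ), f γ := by
        have hterm : ∀ γ ∈ (Finset.univ.erase 0).filter (fun γ => ¬ P γ),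
            -(((9:ℝ)/10) ^ (2 * k - 2) * ‖WB.m A γ‖ ^ 2) ≤ f γ := by
          intro γ hγ
          have hle : ‖WB.m A γ‖ ≤ 9/10 :=
            le_of_not_ge (by simpa [hP] using (Finset.mem_filter.1 hγ).2)
          have hre3 : -1 ≤ (γ x).re := by
            have h4 : |(γ x).re| ≤ 1 := by
              have h5 := Complex.abs_re_le_norm (γ x)
              rw [AddChar.norm_apply] at h5
              exact h5
            exact neg_le_of_abs_le h4
          have hpow : ‖WB.m A γ‖ ^ (2 * k) ≤ ((9:ℝ)/10) ^ (2 * k - 2) * ‖WB.m A γ‖ ^ 2 := by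
            have hsplitpow : ‖WB.m A γ‖ ^ (2 * k)
                = ‖WB.m A γ‖ ^ (2 * k - 2) * ‖WB.m A γ‖ ^ 2 := by
              rw [← pow_add, Nat.sub_add_cancel (by omega : 2 ≤ 2 * k)]
            rw [hsplitpow]
            apply mul_le_mul_of_nonneg_right _ (by positivity)
            exact pow_le_pow_left₀ (norm_nonneg _) hle _
          have h5 : 0 ≤ ‖WB.m A γ‖ ^ (2 * k) := by positivity
          rw [hf]
          nlinarith
        refine le_trans ?_ (Finset.sum_le_sum hterm)
        rw [Finset.sum_neg_distrib, neg_le_neg_iff, ← Finset.mul_sum]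
        apply mul_le_mul_of_nonneg_left _ (by positivity)
        have := WB.parseval A hA
        calc ∑ γ ∈ (Finset.univ.erase 0).filter (fun γ => ¬ P γ), ‖WB.m A γ‖ ^ 2
            ≤ ∑ γ : AddChar G ℂ, ‖WB.m A γ‖ ^ 2 :=
              Finset.sum_le_sum_of_subset_of_nonneg (Finset.filter_subset _ _ |>.trans
                (Finset.erase_subset _ _)) (fun γ _ _ => by positivity)
          _ = N / a := this
      have hnum : ((9:ℝ)/10) ^ (2 * k - 2) * (N / a) ≤ 1/2 := by
        have hn18 : (2 * k - 2 : ℕ) = 18 * ⌈L⌉₊ := by rw [hk]; omega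
        have he1 : (9:ℝ)/10 ≤ Real.exp (-(1/10)) := by
          have := Real.add_one_le_exp (-(1/10) : ℝ)
          linarith
        have he2 : ((9:ℝ)/10) ^ (2 * k - 2) ≤ Real.exp (-(((2*k-2 : ℕ) : ℝ))/10) := by
          calc ((9:ℝ)/10) ^ (2 * k - 2) ≤ (Real.exp (-(1/10))) ^ (2 * k - 2) :=
                pow_le_pow_left₀ (by norm_num) he1 _
            _ = Real.exp (((2*k-2 : ℕ) : ℝ) * (-(1/10))) := by
                rw [← Real.exp_nat_mul]
            _ = Real.exp (-(((2*k-2 : ℕ) : ℝ))/10) := by ring_nf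
        have he3 : Real.exp (-(((2*k-2 : ℕ) : ℝ))/10) ≤ Real.exp (-L) := by
          apply Real.exp_le_exp.2
          have : (10:ℝ) * L ≤ ((2*k-2 : ℕ) : ℝ) := by
            rw [hn18]
            push_cast
            have := Nat.le_ceil L
            nlinarith
          linarith
        have he4 : Real.exp (-L) = a / (2 * N) := by
          rw [hL, Real.exp_neg, Real.exp_log (div_pos (by linarith) ha0)]
          rw [inv_div]
        have : ((9:ℝ)/10) ^ (2 * k - 2) ≤ a / (2 * N) := by
          rw [← he4]; exact he2.trans he3
        have haNe : a ≠ 0 := ne_of_gt ha0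
        have hNNe : N ≠ 0 := ne_of_gt hN0
        calc ((9:ℝ)/10) ^ (2 * k - 2) * (N / a) ≤ (a / (2 * N)) * (N / a) := by
              apply mul_le_mul_of_nonneg_right this (div_nonneg hN0.le ha0.le)
          _ = 1/2 := by field_simp
      rw [hsplit, hsplit2, hf0]
      linarith
    rw [hzero] at hre
    simp only [Complex.zero_re] at hre
    rw [← hre] at hposSum
    norm_num at hposSum
end
end

section
/- If d[X;Y] = 0 for G-valued random variables X, Y, then there exists a finite subgroup H of G and elements s, t in G such that X is distributed as s + U_H and Y is distributed as t + U_H, where U_H is uniform on H. -/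
open scoped BigOperators Pointwise
noncomputable section

section Gibbs
variable {β : Type*}

/-- Gibbs' inequality on a finite set, with equality case. -/
lemma gibbs {Z : Finset β} {a b : β → ℝ} (ha0 : ∀ z ∈ Z, 0 ≤ a z)
    (hb0 : ∀ z ∈ Z, 0 ≤ b z) (ha1 : ∑ z ∈ Z, a z = 1) (hb1 : ∑ z ∈ Z, b z = 1)
    (hab : ∀ z ∈ Z, 0 < a z → 0 < b z) :
    ∑ z ∈ Z, a z * Real.log (b z) ≤ ∑ z ∈ Z, a z * Real.log (a z) ∧
    ((∑ z ∈ Z, a z * Real.log (b z) = ∑ z ∈ Z, a z * Real.log (a z)) →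
      ∀ z ∈ Z, a z = b z) := by
  set f : β → ℝ := fun z => a z * Real.log (b z) - a z * Real.log (a z) with hf_def
  set g : β → ℝ := fun z => (if 0 < a z then b z else 0) - a z with hg_def
  have hfg : ∀ z ∈ Z, f z ≤ g z := by
    intro z hz
    by_cases h : 0 < a z
    · have hb := hab z hz h
      have h1 : Real.log (b z) - Real.log (a z) = Real.log (b z / a z) :=
        (Real.log_div (ne_of_gt hb) (ne_of_gt h)).symm
      have h2 : Real.log (b z / a z) ≤ b z / a z - 1 :=
        Real.log_le_sub_one_of_pos (div_pos hb h)
      have h3 : a z * Real.log (b z / a z) ≤ a z * (b z / a z - 1) := by nlinarith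
      have h4 : a z * (b z / a z - 1) = b z - a z := by field_simp
      simp only [hf_def, hg_def, if_pos h]
      calc a z * Real.log (b z) - a z * Real.log (a z)
          = a z * Real.log (b z / a z) := by rw [← h1]; ring
        _ ≤ a z * (b z / a z - 1) := h3
        _ = b z - a z := h4
    · have ha' : a z = 0 := le_antisymm (not_lt.1 h) (ha0 z hz)
      simp [hf_def, hg_def, ha', h]
  have hifle : ∀ z ∈ Z, (if 0 < a z then b z else 0) ≤ b z := by
    intro z hz; split
    · exact le_refl _
    · exact hb0 z hz
  have hg : ∑ z ∈ Z, g z ≤ 0 := by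
    have h1 : ∑ z ∈ Z, (if 0 < a z then b z else 0) ≤ ∑ z ∈ Z, b z :=
      Finset.sum_le_sum hifle
    simp only [hg_def, Finset.sum_sub_distrib, ha1, hb1] at *
    linarith
  have hfsum : ∑ z ∈ Z, f z =
      ∑ z ∈ Z, a z * Real.log (b z) - ∑ z ∈ Z, a z * Real.log (a z) := by
    simp [hf_def, Finset.sum_sub_distrib]
  have hf : ∑ z ∈ Z, f z ≤ 0 := le_trans (Finset.sum_le_sum hfg) hg
  constructor
  · linarith [hfsum ▸ hf]
  · intro heq
    have hf0 : ∑ z ∈ Z, f z = 0 := by rw [hfsum, heq]; ring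
    have hgeq : ∑ z ∈ Z, g z = 0 :=
      le_antisymm hg (hf0 ▸ Finset.sum_le_sum hfg)
    have hpt : ∀ z ∈ Z, f z = g z := by
      have : ∑ z ∈ Z, f z = ∑ z ∈ Z, g z := by rw [hf0, hgeq]
      exact (Finset.sum_eq_sum_iff_of_le hfg).1 this
    have hifsum : ∑ z ∈ Z, (if 0 < a z then b z else 0) = ∑ z ∈ Z, b z := by
      have h1 : ∑ z ∈ Z, (if 0 < a z then b z else 0) - ∑ z ∈ Z, a z = 0 := by
        rw [← Finset.sum_sub_distrib]; exact hgeq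
      rw [hb1]; linarith [ha1, h1]
    have hbz : ∀ z ∈ Z, ¬ 0 < a z → b z = 0 := by
      intro z hz h
      have := (Finset.sum_eq_sum_iff_of_le hifle).1 hifsum z hz
      rw [if_neg h] at this
      exact this.symm
    intro z hz
    by_cases h : 0 < a z
    · have hb := hab z hz h
      have hfg' := hpt z hz
      simp only [hf_def, hg_def, if_pos h] at hfg'
      have h1 : a z * Real.log (b z / a z) = b z - a z := by
        rw [Real.log_div (ne_of_gt hb) (ne_of_gt h)]; linarith [hfg']
      by_contra hne
      have hne2 : b z / a z ≠ 1 := by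
        intro hcon
        apply hne
        field_simp at hcon
        linarith
      have h2 := Real.log_lt_sub_one_of_pos (div_pos hb h) hne2
      have h3 : a z * Real.log (b z / a z) < a z * (b z / a z - 1) := by nlinarith
      have h4 : a z * (b z / a z - 1) = b z - a z := by field_simp
      linarith
    · have ha' : a z = 0 := le_antisymm (not_lt.1 h) (ha0 z hz)
      rw [ha', hbz z hz h]

/-- Entropy of a mixture is at least the common entropy of the components,
with equality forcing all components to equal the mixture. -/
lemma mix_ent {ι : Type*} (T : Finset ι) (Z : Finset β) (w : ι → ℝ) (f : ι → β → ℝ)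
    (r : β → ℝ) (hr : ∀ z ∈ Z, r z = ∑ y ∈ T, w y * f y z)
    (hw : ∀ y ∈ T, 0 < w y) (hw1 : ∑ y ∈ T, w y = 1)
    (hf0 : ∀ y ∈ T, ∀ z ∈ Z, 0 ≤ f y z) (hf1 : ∀ y ∈ T, ∑ z ∈ Z, f y z = 1)
    {c : ℝ} (hc : ∀ y ∈ T, ∑ z ∈ Z, -(f y z * Real.log (f y z)) = c) :
    c ≤ ∑ z ∈ Z, -(r z * Real.log (r z)) ∧
    ((∑ z ∈ Z, -(r z * Real.log (r z)) = c) → ∀ y ∈ T, ∀ z ∈ Z, f y z = r z) := by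
  have hr0 : ∀ z ∈ Z, 0 ≤ r z := by
    intro z hz; rw [hr z hz]
    exact Finset.sum_nonneg fun y hy => mul_nonneg (hw y hy).le (hf0 y hy z hz)
  have hr1 : ∑ z ∈ Z, r z = 1 := by
    rw [Finset.sum_congr rfl hr, Finset.sum_comm]
    calc ∑ y ∈ T, ∑ z ∈ Z, w y * f y z = ∑ y ∈ T, w y * ∑ z ∈ Z, f y z := by
          simp [Finset.mul_sum]
      _ = ∑ y ∈ T, w y := by
          apply Finset.sum_congr rfl; intro y hy; rw [hf1 y hy, mul_one]
      _ = 1 := hw1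
  have hab : ∀ y ∈ T, ∀ z ∈ Z, 0 < f y z → 0 < r z := by
    intro y hy z hz hfyz
    rw [hr z hz]
    have h1 : w y * f y z ≤ ∑ y' ∈ T, w y' * f y' z :=
      Finset.single_le_sum (fun y' hy' => mul_nonneg (hw y' hy').le (hf0 y' hy' z hz)) hy
    have := mul_pos (hw y hy) hfyz
    linarith
  have gib := fun y (hy : y ∈ T) =>
    gibbs (hf0 y hy) hr0 (hf1 y hy) hr1 (hab y hy)
  set CE : ι → ℝ := fun y => ∑ z ∈ Z, -(f y z * Real.log (r z)) with hCE_def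
  have hCEge : ∀ y ∈ T, c ≤ CE y := by
    intro y hy
    have h1 := (gib y hy).1
    have h2 : CE y = -∑ z ∈ Z, f y z * Real.log (r z) := by
      simp [hCE_def]
    have h3 : c = -∑ z ∈ Z, f y z * Real.log (f y z) := by
      rw [← hc y hy]; simp
    rw [h2, h3]; linarith
  have key : ∑ z ∈ Z, -(r z * Real.log (r z)) = ∑ y ∈ T, w y * CE y := by
    have h1 : ∀ z ∈ Z, -(r z * Real.log (r z)) =
        ∑ y ∈ T, w y * -(f y z * Real.log (r z)) := by
      intro z hz
      rw [hr z hz, Finset.sum_mul, ← Finset.sum_neg_distrib]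
      apply Finset.sum_congr rfl; intro y _; ring
    rw [Finset.sum_congr rfl h1, Finset.sum_comm]
    apply Finset.sum_congr rfl; intro y _
    simp [hCE_def, Finset.mul_sum]
  have hle : ∀ y ∈ T, w y * c ≤ w y * CE y := fun y hy =>
    mul_le_mul_of_nonneg_left (hCEge y hy) (hw y hy).le
  have hwc : ∑ y ∈ T, w y * c = c := by
    rw [← Finset.sum_mul, hw1, one_mul]
  constructor
  · rw [key, ← hwc]
    exact Finset.sum_le_sum hle
  · intro heq y hy z hz
    have hsum : ∑ y ∈ T, w y * c = ∑ y ∈ T, w y * CE y := by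
      rw [hwc, ← heq, key]
    have hpt := (Finset.sum_eq_sum_iff_of_le hle).1 hsum y hy
    have hCEeq : CE y = c :=
      (mul_left_cancel₀ (ne_of_gt (hw y hy)) hpt.symm)
    have hlog : ∑ z ∈ Z, f y z * Real.log (r z) = ∑ z ∈ Z, f y z * Real.log (f y z) := by
      have h2 : ∑ z ∈ Z, -(f y z * Real.log (r z)) = -∑ z ∈ Z, f y z * Real.log (r z) := by
        simp
      have h3 : ∑ z ∈ Z, -(f y z * Real.log (f y z)) =
          -∑ z ∈ Z, f y z * Real.log (f y z) := by simp
      have h4 := hc y hy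
      have h5 : (∑ z ∈ Z, -(f y z * Real.log (r z))) = c := hCEeq
      rw [h2] at h5; rw [h3] at h4; linarith
    exact (gib y hy).2 hlog z hz

end Gibbs

/-- The stabilizer of a function under translation. -/
def stab {G : Type*} [AddCommGroup G] (p : G → ℝ) : AddSubgroup G where
  carrier := {d | ∀ x, p (x + d) = p x}
  zero_mem' := fun x => by rw [add_zero]
  add_mem' := by
    intro a b ha hb x
    rw [← add_assoc, hb (x + a), ha x]
  neg_mem' := by
    intro a ha x
    have h := ha (x + -a)
    rw [neg_add_cancel_right] at h
    exact h.symm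

section Main
variable {G : Type*} [AddCommGroup G]

lemma stab_mem_iff (p : G → ℝ) (d : G) : d ∈ stab p ↔ ∀ x, p (x + d) = p x := Iff.rfl

lemma conv_repr1 (p q : G → ℝ) {S : Finset G} (hS : Function.support p ⊆ ↑S) (z : G) :
    conv p (negp q) z = ∑ x ∈ S, p x * q (x - z) := by
  have h1 : conv p (negp q) z = ∑ᶠ x, p x * q (x - z) := by
    unfold conv negp
    congr 1 with x
    rw [neg_sub]
  rw [h1]
  apply finsum_eq_sum_of_support_subset
  intro x hx
  apply hS
  intro hpx
  apply hx
  simp [Function.mem_support, hpx]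

lemma conv_repr2 (p q : G → ℝ) {T : Finset G} (hT : Function.support q ⊆ ↑T) (z : G) :
    conv p (negp q) z = ∑ y ∈ T, q y * p (z + y) := by
  have h1 : conv p (negp q) z = ∑ᶠ x, p x * q (x - z) := by
    unfold conv negp
    congr 1 with x
    rw [neg_sub]
  have h2 : ∑ᶠ x, p x * q (x - z) = ∑ᶠ y, p (z + y) * q y := by
    rw [← finsum_comp_equiv (Equiv.addLeft z) (f := fun x => p x * q (x - z))]
    congr 1 with y
    simp [add_sub_cancel_left]
  rw [h1, h2]
  have h3 : (∑ᶠ y, p (z + y) * q y) = ∑ y ∈ T, p (z + y) * q y := by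
    apply finsum_eq_sum_of_support_subset
    intro y hy
    apply hT
    intro hqy
    apply hy
    simp [Function.mem_support, hqy]
  rw [h3]
  exact Finset.sum_congr rfl fun y _ => mul_comm _ _

end Main

/-- if `d[X;Y] = 0` then `X` and `Y` are translates of the uniform distribution
on a common finite subgroup `H` of `G`. -/
theorem rdist_eq_zero_iff_uniform_on_coset {G : Type*} [AddCommGroup G] (p q : G → ℝ)
    (hp : IsPMF p) (hq : IsPMF q) (h : rdist p q = 0) :
    ∃ (H : AddSubgroup G) (s t : G), (H : Set G).Finite ∧
      p = Set.indicator (s +ᵥ (H : Set G)) (fun _ => (Nat.card H : ℝ)⁻¹) ∧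
      q = Set.indicator (t +ᵥ (H : Set G)) (fun _ => (Nat.card H : ℝ)⁻¹) := by
  classical
  obtain ⟨hp0, hpfin, hp1⟩ := hp
  obtain ⟨hq0, hqfin, hq1⟩ := hq
  set S : Finset G := hpfin.toFinset with hS_def
  set T : Finset G := hqfin.toFinset with hT_def
  have memS : ∀ x, x ∈ S ↔ p x ≠ 0 := fun x => by
    simp [hS_def, Set.Finite.mem_toFinset, Function.mem_support]
  have memT : ∀ x, x ∈ T ↔ q x ≠ 0 := fun x => by
    simp [hT_def, Set.Finite.mem_toFinset, Function.mem_support]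
  have hpS : Function.support p ⊆ ↑S := by rw [hS_def, Set.Finite.coe_toFinset]
  have hqT : Function.support q ⊆ ↑T := by rw [hT_def, Set.Finite.coe_toFinset]
  set Z : Finset G := S - T with hZ_def
  set r : G → ℝ := conv p (negp q) with hr_def
  have hr1 : ∀ z, r z = ∑ x ∈ S, p x * q (x - z) := fun z => conv_repr1 p q hpS z
  have hr2 : ∀ z, r z = ∑ y ∈ T, q y * p (z + y) := fun z => conv_repr2 p q hqT z
  have hrsupp : ∀ z, r z ≠ 0 → z ∈ Z := by
    intro z hz
    rw [hr2] at hz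
    obtain ⟨y, hy, hne⟩ := Finset.exists_ne_zero_of_sum_ne_zero hz
    have hpz : p (z + y) ≠ 0 := fun h0 => hne (by rw [h0, mul_zero])
    have hzS : z + y ∈ S := (memS _).2 hpz
    have h2 : (z + y) - y ∈ S - T := Finset.sub_mem_sub hzS hy
    rwa [add_sub_cancel_right] at h2
  have hpsum : ∑ x ∈ S, p x = 1 := by
    rw [← finsum_eq_sum_of_support_subset p hpS]; exact hp1
  have hqsum : ∑ y ∈ T, q y = 1 := by
    rw [← finsum_eq_sum_of_support_subset q hqT]; exact hq1
  have ent_sum : ∀ (c : G → ℝ) (W : Finset G), Function.support c ⊆ ↑W →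
      ent c = ∑ x ∈ W, -(c x * Real.log (c x)) := by
    intro c W hW
    apply finsum_eq_sum_of_support_subset
    intro x hx
    apply hW
    intro h0
    apply hx
    simp [Function.mem_support, h0]
  have entp_eq : ent p = ∑ x ∈ S, -(p x * Real.log (p x)) := ent_sum p S hpS
  have entq_eq : ent q = ∑ x ∈ T, -(q x * Real.log (q x)) := ent_sum q T hqT
  have entr_eq : ent r = ∑ z ∈ Z, -(r z * Real.log (r z)) :=
    ent_sum r Z fun z hz => Finset.mem_coe.2 (hrsupp z hz)
  -- shifted sums for the first application
  have shift : ∀ (F : G → ℝ), Function.support F ⊆ ↑S → ∀ y ∈ T,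
      ∑ z ∈ Z, F (z + y) = ∑ᶠ x, F x := by
    intro F hF y hy
    have h1 : (∑ᶠ z, F (z + y)) = ∑ z ∈ Z, F (z + y) := by
      apply finsum_eq_sum_of_support_subset
      intro z hz
      have hFz : F (z + y) ≠ 0 := hz
      have hzS : z + y ∈ S := Finset.mem_coe.1 (hF hFz)
      have h2 : (z + y) - y ∈ S - T := Finset.sub_mem_sub hzS hy
      rw [add_sub_cancel_right] at h2
      exact Finset.mem_coe.2 h2
    have h2 : (∑ᶠ z, F ((Equiv.addRight y) z)) = ∑ᶠ x, F x := finsum_comp_equiv _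
    rw [← h1, ← h2]
    rfl
  have refl2 : ∀ (F : G → ℝ), Function.support F ⊆ ↑T → ∀ x ∈ S,
      ∑ z ∈ Z, F (x - z) = ∑ᶠ w, F w := by
    intro F hF x hx
    have h1 : (∑ᶠ z, F (x - z)) = ∑ z ∈ Z, F (x - z) := by
      apply finsum_eq_sum_of_support_subset
      intro z hz
      have hFz : F (x - z) ≠ 0 := hz
      have hzT : x - z ∈ T := Finset.mem_coe.1 (hF hFz)
      have h2 : x - (x - z) ∈ S - T := Finset.sub_mem_sub hx hzT
      rw [sub_sub_cancel] at h2
      exact Finset.mem_coe.2 h2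
    have h2 : (∑ᶠ z, F ((Equiv.subLeft x) z)) = ∑ᶠ w, F w := finsum_comp_equiv _
    rw [← h1, ← h2]
    rfl
  have hsuppent : ∀ (c : G → ℝ),
      Function.support (fun x => -(c x * Real.log (c x))) ⊆ Function.support c := by
    intro c x hx
    intro h0
    apply hx
    simp [h0]
  have M1 := mix_ent T Z q (fun y z => p (z + y)) r (fun z _ => hr2 z)
      (fun y hy => lt_of_le_of_ne (hq0 y) (Ne.symm ((memT y).1 hy))) hqsum
      (fun y _ z _ => hp0 _)
      (fun y hy => by rw [shift p hpS y hy]; exact hp1)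
      (c := ent p)
      (fun y hy => by
        rw [shift (fun x => -(p x * Real.log (p x))) (fun x hx => hpS (hsuppent p hx)) y hy]
        rfl)
  have M2 := mix_ent S Z p (fun x z => q (x - z)) r (fun z _ => hr1 z)
      (fun x hx => lt_of_le_of_ne (hp0 x) (Ne.symm ((memS x).1 hx))) hpsum
      (fun x _ z _ => hq0 _)
      (fun x hx => by rw [refl2 q hqT x hx]; exact hq1)
      (c := ent q)
      (fun x hx => by
        rw [refl2 (fun w => -(q w * Real.log (q w))) (fun w hw => hqT (hsuppent q hw)) x hx]
        rfl)
  have hrd : ent r - ent p / 2 - ent q / 2 = 0 := h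
  have hEp : ent p ≤ ent r := by rw [entr_eq]; exact M1.1
  have hEq : ent q ≤ ent r := by rw [entr_eq]; exact M2.1
  have E1 : ∀ y ∈ T, ∀ z ∈ Z, p (z + y) = r z := M1.2 (by rw [← entr_eq]; linarith)
  have E2 : ∀ x ∈ S, ∀ z ∈ Z, q (x - z) = r z := M2.2 (by rw [← entr_eq]; linarith)
  have hrZ : ∀ z, z ∉ Z → r z = 0 := by
    intro z hz
    by_contra h0
    exact hz (hrsupp z h0)
  have E1' : ∀ y ∈ T, ∀ z, p (z + y) = r z := by
    intro y hy z
    by_cases hz : z ∈ Z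
    · exact E1 y hy z hz
    · rw [hrZ z hz]
      by_contra h0
      apply hz
      have hzS : z + y ∈ S := (memS _).2 h0
      have h2 : (z + y) - y ∈ S - T := Finset.sub_mem_sub hzS hy
      rwa [add_sub_cancel_right] at h2
  have E2' : ∀ x ∈ S, ∀ z, q (x - z) = r z := by
    intro x hx z
    by_cases hz : z ∈ Z
    · exact E2 x hx z hz
    · rw [hrZ z hz]
      by_contra h0
      apply hz
      have hzT : x - z ∈ T := (memT _).2 h0
      have h2 : x - (x - z) ∈ S - T := Finset.sub_mem_sub hx hzT
      rwa [sub_sub_cancel] at h2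
  have Pinv : ∀ y ∈ T, ∀ y' ∈ T, ∀ x, p (x + (y - y')) = p x := by
    intro y hy y' hy' x
    rw [show x + (y - y') = (x - y') + y from by abel, E1' y hy (x - y'),
      ← E1' y' hy' (x - y'), show (x - y') + y' = x from by abel]
  have Qinv : ∀ x ∈ S, ∀ x' ∈ S, ∀ w, q (w + (x - x')) = q w := by
    intro x hx x' hx' w
    rw [show w + (x - x') = x - (x' - w) from by abel, E2' x hx (x' - w),
      ← E2' x' hx' (x' - w), show x' - (x' - w) = w from by abel]
  -- the subgroups generated by the difference sets
  set K : AddSubgroup G := AddSubgroup.closure ((S : Set G) - (S : Set G)) with hK_def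
  set L : AddSubgroup G := AddSubgroup.closure ((T : Set G) - (T : Set G)) with hL_def
  have hLp : L ≤ stab p := by
    rw [hL_def]
    apply (AddSubgroup.closure_le _).2
    intro d hd
    obtain ⟨y, hy, y', hy', rfl⟩ := Set.mem_sub.1 hd
    show ∀ x, p (x + (y - y')) = p x
    exact Pinv y (Finset.mem_coe.1 hy) y' (Finset.mem_coe.1 hy')
  have hKq : K ≤ stab q := by
    rw [hK_def]
    apply (AddSubgroup.closure_le _).2
    intro d hd
    obtain ⟨x, hx, x', hx', rfl⟩ := Set.mem_sub.1 hd
    show ∀ w, q (w + (x - x')) = q w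
    exact Qinv x (Finset.mem_coe.1 hx) x' (Finset.mem_coe.1 hx')
  have hSne : S.Nonempty := by
    rw [Finset.nonempty_iff_ne_empty]
    intro h0
    rw [h0, Finset.sum_empty] at hpsum
    norm_num at hpsum
  have hTne : T.Nonempty := by
    rw [Finset.nonempty_iff_ne_empty]
    intro h0
    rw [h0, Finset.sum_empty] at hqsum
    norm_num at hqsum
  obtain ⟨s, hs⟩ := hSne
  obtain ⟨t, ht⟩ := hTne
  have hsL : ∀ l ∈ L, s + l ∈ S := by
    intro l hl
    rw [memS, (stab_mem_iff p l).1 (hLp hl) s]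
    exact (memS s).1 hs
  have htK : ∀ k ∈ K, t + k ∈ T := by
    intro k hk
    rw [memT, (stab_mem_iff q k).1 (hKq hk) t]
    exact (memT t).1 ht
  have hLK : L ≤ K := by
    intro l hl
    have h1 : s + l ∈ S := hsL l hl
    have h2 : (s + l) - s ∈ ((S : Set G) - (S : Set G)) :=
      Set.sub_mem_sub (Finset.mem_coe.2 h1) (Finset.mem_coe.2 hs)
    have h3 := AddSubgroup.subset_closure h2
    rwa [add_sub_cancel_left] at h3
  have hKL : K ≤ L := by
    intro k hk
    have h1 : t + k ∈ T := htK k hk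
    have h2 : (t + k) - t ∈ ((T : Set G) - (T : Set G)) :=
      Set.sub_mem_sub (Finset.mem_coe.2 h1) (Finset.mem_coe.2 ht)
    have h3 := AddSubgroup.subset_closure h2
    rwa [add_sub_cancel_left] at h3
  have hHfin : ((L : Set G)).Finite := by
    apply Set.Finite.subset ((S.finite_toSet).image (fun x => x - s))
    intro l hl
    exact ⟨s + l, Finset.mem_coe.2 (hsL l hl), by simp⟩
  have hstabp : ∀ h' ∈ L, ∀ x, p (x + h') = p x := fun h' hh' =>
    (stab_mem_iff p h').1 (hLp hh')
  have hstabq : ∀ h' ∈ L, ∀ x, q (x + h') = q x := fun h' hh' =>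
    (stab_mem_iff q h').1 (hKq (hLK hh'))
  have hPsupp : ∀ x, p x ≠ 0 ↔ x ∈ s +ᵥ (L : Set G) := by
    intro x
    constructor
    · intro hx
      have hxS : x ∈ S := (memS x).2 hx
      have h2 : x - s ∈ ((S : Set G) - (S : Set G)) :=
        Set.sub_mem_sub (Finset.mem_coe.2 hxS) (Finset.mem_coe.2 hs)
      have h4 : x - s ∈ L := hKL (AddSubgroup.subset_closure h2)
      exact Set.mem_vadd_set.2 ⟨x - s, h4, by simp⟩
    · intro hx
      obtain ⟨h', hh', rfl⟩ := Set.mem_vadd_set.1 hx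
      show p (s + h') ≠ 0
      rw [hstabp h' hh' s]
      exact (memS s).1 hs
  have hQsupp : ∀ x, q x ≠ 0 ↔ x ∈ t +ᵥ (L : Set G) := by
    intro x
    constructor
    · intro hx
      have hxT : x ∈ T := (memT x).2 hx
      have h2 : x - t ∈ ((T : Set G) - (T : Set G)) :=
        Set.sub_mem_sub (Finset.mem_coe.2 hxT) (Finset.mem_coe.2 ht)
      have h4 : x - t ∈ L := AddSubgroup.subset_closure h2
      exact Set.mem_vadd_set.2 ⟨x - t, h4, by simp⟩
    · intro hx
      obtain ⟨h', hh', rfl⟩ := Set.mem_vadd_set.1 hx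
      show q (t + h') ≠ 0
      rw [hstabq h' hh' t]
      exact (memT t).1 ht
  set Hfin : Finset G := hHfin.toFinset with hHfin_def
  have memHfin : ∀ x, x ∈ Hfin ↔ x ∈ L := fun x => by
    simp [hHfin_def, Set.Finite.mem_toFinset]
  have hSimage : S = Hfin.image (fun h' => s + h') := by
    ext x
    rw [Finset.mem_image]
    constructor
    · intro hx
      obtain ⟨h', hh', hhx⟩ := Set.mem_vadd_set.1 ((hPsupp x).1 ((memS x).1 hx))
      exact ⟨h', (memHfin h').2 hh', by simpa using hhx⟩
    · rintro ⟨h', hh', rfl⟩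
      exact (memS _).2 ((hPsupp _).2 (Set.mem_vadd_set.2
        ⟨h', (memHfin h').1 hh', by simp⟩))
  have hTimage : T = Hfin.image (fun h' => t + h') := by
    ext x
    rw [Finset.mem_image]
    constructor
    · intro hx
      obtain ⟨h', hh', hhx⟩ := Set.mem_vadd_set.1 ((hQsupp x).1 ((memT x).1 hx))
      exact ⟨h', (memHfin h').2 hh', by simpa using hhx⟩
    · rintro ⟨h', hh', rfl⟩
      exact (memT _).2 ((hQsupp _).2 (Set.mem_vadd_set.2
        ⟨h', (memHfin h').1 hh', by simp⟩))
  have hps_val : p s = (Hfin.card : ℝ)⁻¹ := by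
    have h1 : ∑ x ∈ S, p x = ∑ h' ∈ Hfin, p (s + h') := by
      rw [hSimage]
      apply Finset.sum_image
      intro a _ b _ hab
      exact add_left_cancel hab
    have h2 : ∀ h' ∈ Hfin, p (s + h') = p s := fun h' hh' =>
      hstabp h' ((memHfin h').1 hh') s
    have h3 : p s * (Hfin.card : ℝ) = 1 := by
      rw [mul_comm, ← nsmul_eq_mul, ← Finset.sum_const, ← Finset.sum_congr rfl h2, ← h1,
        hpsum]
    exact eq_inv_of_mul_eq_one_left h3
  have hqt_val : q t = (Hfin.card : ℝ)⁻¹ := by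
    have h1 : ∑ x ∈ T, q x = ∑ h' ∈ Hfin, q (t + h') := by
      rw [hTimage]
      apply Finset.sum_image
      intro a _ b _ hab
      exact add_left_cancel hab
    have h2 : ∀ h' ∈ Hfin, q (t + h') = q t := fun h' hh' =>
      hstabq h' ((memHfin h').1 hh') t
    have h3 : q t * (Hfin.card : ℝ) = 1 := by
      rw [mul_comm, ← nsmul_eq_mul, ← Finset.sum_const, ← Finset.sum_congr rfl h2, ← h1,
        hqsum]
    exact eq_inv_of_mul_eq_one_left h3
  have hNatcard : (Nat.card L : ℝ) = (Hfin.card : ℝ) := by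
    norm_cast
    exact Nat.card_eq_card_finite_toFinset hHfin
  refine ⟨L, s, t, hHfin, ?_, ?_⟩
  · funext x
    by_cases hx : x ∈ s +ᵥ (L : Set G)
    · rw [Set.indicator_of_mem hx]
      obtain ⟨h', hh', rfl⟩ := Set.mem_vadd_set.1 hx
      show p (s + h') = (Nat.card L : ℝ)⁻¹
      rw [hstabp h' hh' s, hps_val, hNatcard]
    · rw [Set.indicator_of_notMem hx]
      by_contra h0
      exact hx ((hPsupp x).1 h0)
  · funext x
    by_cases hx : x ∈ t +ᵥ (L : Set G)
    · rw [Set.indicator_of_mem hx]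
      obtain ⟨h', hh', rfl⟩ := Set.mem_vadd_set.1 hx
      show q (t + h') = (Nat.card L : ℝ)⁻¹
      rw [hstabq h' hh' t, hqt_val, hNatcard]
    · rw [Set.indicator_of_notMem hx]
      by_contra h0
      exact hx ((hQsupp x).1 h0)
end
end
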